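/- arXiv:2304.09186 — 5 statements merged into one kernel-verified Lean document; each statement's English description precedes it below -/
import Mathlib

section
/- Let G = (V,E) be a locally finite simple graph, S ⊆ V, t ∈ ℕ, and let C be an infinite component of S. Let T be a nonempty finite set of t-trifurcations of S, all belonging to C, such that the sets C_{x,t}(S), x ∈ T, are pairwise disjoint. Then the subgraph induced on C \ ⋃_{x∈T} C_{x,t}(S) has at least |T| + 2 infinite connected components. -/
/-- The closed ball of radius `t` around `x` in the graph `G`. -/
def GraphBall {V : Type*} (G : SimpleGraph V) (x : V) (t : ℕ) : Set V :=
  {y | G.edist x y ≤ t}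

/-- The inner vertex boundary of a set `A`. -/
def InnerBoundary {V : Type*} (G : SimpleGraph V) (A : Set V) : Set V :=
  {x ∈ A | ∃ y, y ∉ A ∧ G.Adj x y}

/-- The connected component of `x` in the subgraph of `G` induced on `S`,
viewed as a subset of `V` (empty if `x ∉ S`). -/
def Comp {V : Type*} (G : SimpleGraph V) (S : Set V) (x : V) : Set V :=
  {y | ∃ (hx : x ∈ S) (hy : y ∈ S), (G.induce S).Reachable ⟨x, hx⟩ ⟨y, hy⟩}

/-- The subgraph of `G` induced on `S` has at least `n` infinite connected
components. -/
def AtLeastInfComps {V : Type*} (G : SimpleGraph V) (S : Set V) (n : ℕ) : Prop :=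
  ∃ f : Fin n → V, (∀ i, f i ∈ S ∧ (Comp G S (f i)).Infinite) ∧
    Function.Injective (fun i => Comp G S (f i))

/-- `x` is a `t`-trifurcation of `S`: it lies in an infinite component `C` of `S`
and the subgraph induced on `C \ C_{x,t}(S)` has at least `3` infinite components. -/
def IsTrifurcation {V : Type*} (G : SimpleGraph V) (S : Set V) (t : ℕ) (x : V) : Prop :=
  x ∈ S ∧ (Comp G S x).Infinite ∧
    AtLeastInfComps G (Comp G S x \ Comp G (S ∩ GraphBall G x t) x) 3

section AuxReach

variable {V : Type*} {G : SimpleGraph V}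

/-- Reachability within a vertex set `A`, as an inductive predicate. -/
inductive ReachIn (G : SimpleGraph V) (A : Set V) : V → V → Prop
  | refl {u : V} (hu : u ∈ A) : ReachIn G A u u
  | tail {u v w : V} (huv : ReachIn G A u v) (h : G.Adj v w) (hw : w ∈ A) : ReachIn G A u w

namespace ReachIn

lemma mem_left {A : Set V} {u v : V} (h : ReachIn G A u v) : u ∈ A := by
  induction h with
  | refl hu => exact hu
  | tail _ _ _ ih => exact ih

lemma mem_right {A : Set V} {u v : V} (h : ReachIn G A u v) : v ∈ A := by
  induction h with
  | refl hu => exact hu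
  | tail _ _ hw _ => exact hw

lemma trans {A : Set V} {u v w : V} (h1 : ReachIn G A u v) (h2 : ReachIn G A v w) :
    ReachIn G A u w := by
  induction h2 with
  | refl _ => exact h1
  | tail _ hadj hw ih => exact .tail ih hadj hw

lemma head {A : Set V} {u v w : V} (h : G.Adj u v) (hu : u ∈ A) (hvw : ReachIn G A v w) :
    ReachIn G A u w := by
  induction hvw with
  | refl hv => exact .tail (.refl hu) h hv
  | tail _ hadj hw ih => exact .tail ih hadj hw

lemma symm {A : Set V} {u v : V} (h : ReachIn G A u v) : ReachIn G A v u := by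
  induction h with
  | refl hu => exact .refl hu
  | tail huv hadj hw ih => exact head hadj.symm hw ih

lemma mono {A B : Set V} {u v : V} (hAB : A ⊆ B) (h : ReachIn G A u v) : ReachIn G B u v := by
  induction h with
  | refl hu => exact .refl (hAB hu)
  | tail _ hadj hw ih => exact .tail ih hadj (hAB hw)

lemma restrict {A B : Set V} {u v : V} (hsub : ∀ q, ReachIn G A u q → q ∈ B)
    (h : ReachIn G A u v) : ReachIn G B u v := by
  induction h with
  | refl hu => exact .refl (hsub _ (.refl hu))
  | tail huv hadj hw ih => exact .tail ih hadj (hsub _ (huv.tail hadj hw))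

lemma bridge {A D : Set V} {u y : V} (h : ReachIn G A u y) (hu : u ∉ D) :
    ReachIn G (A \ D) u y ∨
      ∃ v w, ReachIn G (A \ D) u v ∧ G.Adj v w ∧ w ∈ D ∧ w ∈ A := by
  induction h with
  | refl hu' => exact .inl (.refl ⟨hu', hu⟩)
  | @tail v w huv hadj hw ih =>
    rcases ih with h1 | h2
    · by_cases hwD : w ∈ D
      · exact .inr ⟨_, _, h1, hadj, hwD, hw⟩
      · exact .inl (.tail h1 hadj ⟨hw, hwD⟩)
    · exact .inr h2

end ReachIn

/-- The component of `x` in `A`, via `ReachIn`. -/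
def CompIn (G : SimpleGraph V) (A : Set V) (x : V) : Set V := {y | ReachIn G A x y}

lemma reachIn_of_reachable {A : Set V} {a b : A} (h : (G.induce A).Reachable a b) :
    ReachIn G A a b := by
  obtain ⟨p⟩ := h
  induction p with
  | nil => exact .refl (Subtype.mem _)
  | cons hadj p ih => exact ih.head (by simpa using hadj) (Subtype.mem _)

lemma reachable_of_reachIn {A : Set V} {u v : V} (h : ReachIn G A u v) :
    (G.induce A).Reachable ⟨u, h.mem_left⟩ ⟨v, h.mem_right⟩ := by
  induction h with
  | refl hu => rfl
  | tail huv hadj hw ih =>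
    refine ih.trans (SimpleGraph.Adj.reachable
      (?_ : (G.induce A).Adj ⟨_, huv.mem_right⟩ ⟨_, hw⟩))
    simpa using hadj

lemma comp_eq_compIn (G : SimpleGraph V) (A : Set V) (x : V) : Comp G A x = CompIn G A x := by
  ext y
  constructor
  · rintro ⟨hx, hy, hr⟩
    exact reachIn_of_reachable hr
  · intro h
    exact ⟨h.mem_left, h.mem_right, reachable_of_reachIn h⟩

namespace CompIn

lemma mem_self {A : Set V} {x : V} (hx : x ∈ A) : x ∈ CompIn G A x := .refl hx

lemma comp_subset {A : Set V} {x : V} : CompIn G A x ⊆ A := fun _ h => h.mem_right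

lemma eq_of_mem {A : Set V} {x y : V} (h : y ∈ CompIn G A x) :
    CompIn G A x = CompIn G A y := by
  ext z
  exact ⟨fun hz => (ReachIn.symm h).trans hz, fun hz => ReachIn.trans h hz⟩

lemma eq_of_mem_mem {A : Set V} {x y z : V} (hx : z ∈ CompIn G A x) (hy : z ∈ CompIn G A y) :
    CompIn G A x = CompIn G A y := by
  rw [eq_of_mem hx, eq_of_mem hy]

lemma mono {A B : Set V} {x : V} (hAB : A ⊆ B) : CompIn G A x ⊆ CompIn G B x :=
  fun _ h => ReachIn.mono hAB h

lemma subset_compIn {A B : Set V} {x : V} (h : CompIn G A x ⊆ B) :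
    CompIn G A x ⊆ CompIn G B x := fun _ hq => hq.restrict (fun _ hr => h hr)

lemma restrict_eq {A B : Set V} {x : V} (hAB : A ⊆ B) (h : CompIn G B x ⊆ A) :
    CompIn G A x = CompIn G B x :=
  Set.Subset.antisymm (mono hAB) (subset_compIn h)

end CompIn

/-- Abbreviation for the component of `z` in `S ∩ B(z,t)`. -/
def Cb (G : SimpleGraph V) (S : Set V) (t : ℕ) (z : V) : Set V :=
  CompIn G (S ∩ GraphBall G z t) z

lemma mem_Cb {S : Set V} {t : ℕ} {z : V} (hz : z ∈ S) : z ∈ Cb G S t z :=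
  CompIn.mem_self ⟨hz, by simp [GraphBall]⟩

lemma Cb_subset_comp {S : Set V} {t : ℕ} {x₀ z : V} (hz : z ∈ CompIn G S x₀) :
    Cb G S t z ⊆ CompIn G S x₀ :=
  fun _ hq => hz.trans (ReachIn.mono Set.inter_subset_left hq)

lemma ALC {A : Set V} {n : ℕ}
    (h : ∃ f : Fin n → V, (∀ i, f i ∈ A ∧ (CompIn G A (f i)).Infinite) ∧
      Function.Injective (fun i => CompIn G A (f i))) :
    AtLeastInfComps G A n := by
  simpa [AtLeastInfComps, comp_eq_compIn] using h

end AuxReach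
section LeafLemma

variable {V : Type*} {G : SimpleGraph V}

/-- Leaf lemma: there is `y ∈ T` such that all other elements of `T` lie in one
single component of `C \ C_{y,t}`. -/
lemma leaf_lemma (G : SimpleGraph V) (S : Set V) (t : ℕ) (x₀ : V)
    (T : Finset V) (hne : T.Nonempty)
    (hS : ∀ z ∈ T, z ∈ S)
    (hC : ∀ z ∈ T, z ∈ CompIn G S x₀)
    (hdisj : ∀ z ∈ T, ∀ z' ∈ T, z ≠ z' → Disjoint (Cb G S t z) (Cb G S t z')) :
    ∃ y ∈ T, ∀ z ∈ T, z ≠ y → ∀ z' ∈ T, z' ≠ y →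
      CompIn G (CompIn G S x₀ \ Cb G S t y) z
        = CompIn G (CompIn G S x₀ \ Cb G S t y) z' := by
  classical
  set C := CompIn G S x₀ with hCdef
  have hz_not : ∀ z ∈ T, ∀ z' ∈ T, z ≠ z' → z ∉ Cb G S t z' := by
    intro z hz z' hz' hne' hmem
    exact Set.disjoint_left.mp (hdisj z hz z' hz' hne') (mem_Cb (hS z hz)) hmem
  have hCz_sub_br : ∀ y ∈ T, ∀ z ∈ T, z ≠ y →
      Cb G S t z ⊆ CompIn G (C \ Cb G S t y) z := by
    intro y hy z hz hzy
    refine CompIn.subset_compIn (fun q hq => ⟨Cb_subset_comp (hC z hz) hq, ?_⟩)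
    exact Set.disjoint_left.mp (hdisj z hz y hy hzy) hq
  have hz_mem_br : ∀ y ∈ T, ∀ z ∈ T, z ≠ y → z ∈ CompIn G (C \ Cb G S t y) z := by
    intro y hy z hz hzy
    exact CompIn.mem_self ⟨hC z hz, hz_not z hz y hy hzy⟩
  -- Fact A
  have factA : ∀ x ∈ T, ∀ y ∈ T, ∀ z ∈ T, x ≠ y → z ≠ y → z ≠ x →
      z ∉ CompIn G (C \ Cb G S t y) x → z ∈ CompIn G (C \ Cb G S t x) y := by
    intro x hx y hy z hz hxy hzy hzx hzbr
    have hzC := hC z hz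
    have hyC := hC y hy
    have h1 : ReachIn G S z y := hzC.symm.trans hyC
    have h2 : ReachIn G C z y :=
      h1.restrict (fun q hq => (hzC.trans hq : ReachIn G S x₀ q))
    have hznotCy : z ∉ Cb G S t y := hz_not z hz y hy hzy
    rcases h2.bridge hznotCy with hL | ⟨v, w, hzv, hvw, hwD, _⟩
    · exact absurd hL.mem_right (fun h => h.2 (mem_Cb (hS y hy)))
    · have hne_br : CompIn G (C \ Cb G S t y) z ≠ CompIn G (C \ Cb G S t y) x :=
        fun h => hzbr (h ▸ hz_mem_br y hy z hz hzy)
      have hdisj_br : ∀ q, q ∈ CompIn G (C \ Cb G S t y) z → q ∉ Cb G S t x := by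
        intro q hq hq2
        exact hne_br (CompIn.eq_of_mem_mem hq (hCz_sub_br y hy x hx hxy hq2))
      have hzv' : ReachIn G (C \ Cb G S t x) z v :=
        hzv.restrict (fun q hq => ⟨hq.mem_right.1, hdisj_br q hq⟩)
      have hwreach : ReachIn G (C \ Cb G S t x) y w :=
        hCz_sub_br x hx y hy (Ne.symm hxy) hwD
      exact (hwreach.tail hvw.symm hzv'.mem_right).trans hzv'.symm
  by_cases hcard : T.card ≤ 1
  · obtain ⟨y, hy⟩ := hne
    refine ⟨y, hy, fun z hz hzy => absurd (Finset.card_le_one.mp hcard z hz y hy) hzy⟩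
  · push_neg at hcard
    have hoff : T.offDiag.Nonempty := by
      obtain ⟨a, ha, b, hb, hab⟩ := Finset.one_lt_card.mp hcard
      exact ⟨(a, b), Finset.mem_offDiag.mpr ⟨ha, hb, hab⟩⟩
    obtain ⟨p, hp, hmin⟩ := T.offDiag.exists_min_image
      (fun p => (T.filter (fun u => u ∈ CompIn G (C \ Cb G S t p.1) p.2)).card) hoff
    obtain ⟨x, y⟩ := p
    rw [Finset.mem_offDiag] at hp
    obtain ⟨hxT, hyT, hxy⟩ := hp
    refine ⟨y, hyT, ?_⟩
    have hmain : ∀ z ∈ T, z ≠ y → z ∈ CompIn G (C \ Cb G S t y) x := by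
      intro z hzT hzy
      by_contra hzbr
      have hzx : z ≠ x := by rintro rfl; exact hzbr (hz_mem_br y hyT z hzT hzy)
      have hzin : z ∈ CompIn G (C \ Cb G S t x) y :=
        factA x hxT y hyT z hzT hxy hzy hzx hzbr
      have hyz : (y, z) ∈ T.offDiag := Finset.mem_offDiag.mpr ⟨hyT, hzT, Ne.symm hzy⟩
      have hss : T.filter (fun u => u ∈ CompIn G (C \ Cb G S t y) z)
          ⊂ T.filter (fun u => u ∈ CompIn G (C \ Cb G S t x) y) := by
        rw [Finset.ssubset_iff_of_subset]
        · refine ⟨y, ?_, ?_⟩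
          · exact Finset.mem_filter.mpr ⟨hyT, hz_mem_br x hxT y hyT (Ne.symm hxy)⟩
          · intro hmem
            exact ((Finset.mem_filter.mp hmem).2.mem_right).2 (mem_Cb (hS y hyT))
        · intro u hu
          rw [Finset.mem_filter] at hu ⊢
          obtain ⟨huT, hubr⟩ := hu
          have huy : u ≠ y := by
            intro h
            have : y ∈ CompIn G (C \ Cb G S t y) z := h ▸ hubr
            exact this.mem_right.2 (mem_Cb (hS y hyT))
          have hunotbx : u ∉ CompIn G (C \ Cb G S t y) x := by
            intro h
            exact hzbr ((CompIn.eq_of_mem_mem hubr h) ▸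
              CompIn.mem_self ⟨hC z hzT, hz_not z hzT y hyT hzy⟩)
          have hux : u ≠ x := by
            rintro rfl
            exact hunotbx (hz_mem_br y hyT u huT huy)
          exact ⟨huT, factA x hxT y hyT u huT hxy huy hux hunotbx⟩
      have h1 := Finset.card_lt_card hss
      have h2 := hmin (y, z) hyz
      simp only at h1 h2
      omega
    intro z hzT hzy z' hz'T hz'y
    exact (CompIn.eq_of_mem (hmain z hzT hzy)).symm.trans
      (CompIn.eq_of_mem (hmain z' hz'T hz'y))

end LeafLemma
section KeyLemma

variable {V : Type*} {G : SimpleGraph V}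

lemma key_lemma (G : SimpleGraph V) (S : Set V) (t : ℕ) (x₀ : V) :
    ∀ (n : ℕ) (T : Finset V), T.card = n + 1 →
    (∀ x ∈ T, IsTrifurcation G S t x) →
    (∀ x ∈ T, x ∈ CompIn G S x₀) →
    (∀ x ∈ T, ∀ x' ∈ T, x ≠ x' → Disjoint (Cb G S t x) (Cb G S t x')) →
    ∃ f : Fin (n + 3) → V,
      (∀ i, f i ∈ (CompIn G S x₀ \ ⋃ x ∈ T, Cb G S t x) ∧
        (CompIn G (CompIn G S x₀ \ ⋃ x ∈ T, Cb G S t x) (f i)).Infinite) ∧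
      Function.Injective
        (fun i => CompIn G (CompIn G S x₀ \ ⋃ x ∈ T, Cb G S t x) (f i)) := by
  classical
  intro n
  induction n with
  | zero =>
    intro T hcard hTtri hTC hdisj
    obtain ⟨a, rfl⟩ := Finset.card_eq_one.mp hcard
    have haT : a ∈ ({a} : Finset V) := Finset.mem_singleton_self a
    obtain ⟨haS, _, h3⟩ := hTtri a haT
    have haC : a ∈ CompIn G S x₀ := hTC a haT
    rw [comp_eq_compIn, comp_eq_compIn, ← CompIn.eq_of_mem haC] at h3
    obtain ⟨w, hw, hwinj⟩ := h3
    simp_rw [comp_eq_compIn] at hw hwinj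
    rw [Finset.set_biUnion_singleton]
    exact ⟨w, hw, hwinj⟩
  | succ n IH =>
    intro T hcard hTtri hTC hdisj
    -- set up the leaf
    obtain ⟨y, hyT, hleaf⟩ := leaf_lemma G S t x₀ T
      (Finset.card_pos.mp (by omega)) (fun z hz => (hTtri z hz).1) hTC hdisj
    set C := CompIn G S x₀ with hCdef
    set T' : Finset V := T.erase y with hT'def
    have hT'card : T'.card = n + 1 := by
      rw [hT'def, Finset.card_erase_of_mem hyT]; omega
    have hT'sub : ∀ z ∈ T', z ∈ T := fun z hz => Finset.mem_of_mem_erase hz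
    have hT'ne : ∀ z ∈ T', z ≠ y := fun z hz => Finset.ne_of_mem_erase hz
    obtain ⟨f, hf, hfinj⟩ := IH T' hT'card
      (fun z hz => hTtri z (hT'sub z hz)) (fun z hz => hTC z (hT'sub z hz))
      (fun z hz z' hz' hne => hdisj z (hT'sub z hz) z' (hT'sub z' hz') hne)
    -- notation
    set U : Set V := ⋃ x ∈ T, Cb G S t x with hUdef
    set U' : Set V := ⋃ x ∈ T', Cb G S t x with hU'def
    have hUeq : U = Cb G S t y ∪ U' := by
      rw [hUdef, ← Finset.insert_erase hyT, Finset.set_biUnion_insert]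
    have hmemU' : ∀ q, q ∈ U' ↔ ∃ z ∈ T', q ∈ Cb G S t z := by
      intro q; simp [hU'def]
    have hyS : y ∈ S := (hTtri y hyT).1
    have hyC : y ∈ C := hTC y hyT
    -- y's trifurcation components
    obtain ⟨_, _, h3⟩ := hTtri y hyT
    rw [comp_eq_compIn, comp_eq_compIn, ← CompIn.eq_of_mem hyC] at h3
    obtain ⟨w, hw, hwinj⟩ := h3
    simp_rw [comp_eq_compIn] at hw hwinj
    -- pick z₁ ∈ T'
    have hT'nonempty : T'.Nonempty := Finset.card_pos.mp (by omega)
    obtain ⟨z₁, hz₁⟩ := hT'nonempty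
    set Bc : Set V := CompIn G (C \ Cb G S t y) z₁ with hBcdef
    have hBc : ∀ z ∈ T', CompIn G (C \ Cb G S t y) z = Bc :=
      fun z hz => hleaf z (hT'sub z hz) (hT'ne z hz) z₁ (hT'sub z₁ hz₁) (hT'ne z₁ hz₁)
    -- basic disjointness facts
    have hnotin : ∀ z ∈ T, ∀ z' ∈ T, z ≠ z' → ∀ q, q ∈ Cb G S t z → q ∉ Cb G S t z' :=
      fun z hz z' hz' hne q hq => Set.disjoint_left.mp (hdisj z hz z' hz' hne) hq
    have hCz_sub_C : ∀ z ∈ T, Cb G S t z ⊆ C := fun z hz => Cb_subset_comp (hTC z hz)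
    -- Cb of T' elements are inside Bc
    have hCz_sub_Bc : ∀ z ∈ T', Cb G S t z ⊆ Bc := by
      intro z hz
      rw [← hBc z hz]
      refine CompIn.subset_compIn (fun q hq => ⟨hCz_sub_C z (hT'sub z hz) hq, ?_⟩)
      exact hnotin z (hT'sub z hz) y hyT (hT'ne z hz) q hq
    -- the three branches
    set L : Fin 3 → Set V := fun j => CompIn G (C \ Cb G S t y) (w j) with hLdef
    have hL_disj_U' : ∀ j, L j ≠ Bc → ∀ q ∈ L j, q ∉ U' := by
      intro j hj q hq hqU'
      obtain ⟨z, hz, hqz⟩ := (hmemU' q).mp hqU'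
      exact hj (CompIn.eq_of_mem_mem hq (hCz_sub_Bc z hz hqz))
    have hCU_sub_Cy : C \ U ⊆ C \ Cb G S t y := by
      intro q hq
      exact ⟨hq.1, fun h => hq.2 (hUeq ▸ Or.inl h)⟩
    have hCU_sub_U' : C \ U ⊆ C \ U' := by
      intro q hq
      exact ⟨hq.1, fun h => hq.2 (hUeq ▸ Or.inr h)⟩
    have hL_sub : ∀ j, L j ≠ Bc → L j ⊆ C \ U := by
      intro j hj q hq
      refine ⟨hq.mem_right.1, ?_⟩
      rw [hUeq]
      rintro (h | h)
      · exact hq.mem_right.2 h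
      · exact hL_disj_U' j hj q hq h
    have hLcompU : ∀ j, L j ≠ Bc → CompIn G (C \ U) (w j) = L j :=
      fun j hj => CompIn.restrict_eq hCU_sub_Cy (hL_sub j hj)
    -- K₀ and K i
    set K : Fin (n + 3) → Set V := fun i => CompIn G (C \ U') (f i) with hKdef
    set K₀ : Set V := CompIn G (C \ U') y with hK₀def
    have hy_CU' : y ∈ C \ U' := by
      refine ⟨hyC, fun h => ?_⟩
      obtain ⟨z, hz, hyz⟩ := (hmemU' y).mp h
      exact hnotin y hyT z (hT'sub z hz) (Ne.symm (hT'ne z hz)) y (mem_Cb hyS) hyz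
    have hCby_sub_CU' : Cb G S t y ⊆ C \ U' := by
      intro q hq
      refine ⟨hCz_sub_C y hyT hq, fun h => ?_⟩
      obtain ⟨z, hz, hqz⟩ := (hmemU' q).mp h
      exact hnotin y hyT z (hT'sub z hz) (Ne.symm (hT'ne z hz)) q hq hqz
    have hCby_sub_K₀ : Cb G S t y ⊆ K₀ := CompIn.subset_compIn hCby_sub_CU'
    -- each branch point is in K₀
    have haK₀ : ∀ j, L j ≠ Bc → w j ∈ K₀ := by
      intro j hj
      have haCy : w j ∈ C \ Cb G S t y := (hw j).1
      have haC : w j ∈ C := haCy.1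
      have h1 : ReachIn G S (w j) y := haC.symm.trans hyC
      have h2 : ReachIn G C (w j) y :=
        h1.restrict (fun q hq => (haC.trans hq : ReachIn G S x₀ q))
      rcases h2.bridge haCy.2 with hL' | ⟨v, w', hav, hadj, hw'D, _⟩
      · exact absurd hL'.mem_right (fun h => h.2 (mem_Cb hyS))
      · have hvL : v ∈ L j := hav
        have hav' : ReachIn G (C \ U') (w j) v :=
          hav.restrict (fun q hq => hCU_sub_U' (hL_sub j hj hq))
        have hyv : ReachIn G (C \ U') y v :=
          (hCby_sub_K₀ hw'D).tail hadj.symm hav'.mem_right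
        exact hyv.trans hav'.symm
    -- surviving components
    have hK_ne_K₀_disj : ∀ i, K i ≠ K₀ → ∀ q, q ∈ K i → q ∉ K₀ :=
      fun i hne q h1 h2 => hne (CompIn.eq_of_mem_mem h1 h2)
    have hK_sub_CU : ∀ i, K i ≠ K₀ → K i ⊆ C \ U := by
      intro i hne q hq
      refine ⟨hq.mem_right.1, ?_⟩
      rw [hUeq]
      rintro (h | h)
      · exact hK_ne_K₀_disj i hne q hq (hCby_sub_K₀ h)
      · exact hq.mem_right.2 h
    have hKiU : ∀ i, K i ≠ K₀ → CompIn G (C \ U) (f i) = K i :=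
      fun i hne => CompIn.restrict_eq hCU_sub_U' (hK_sub_CU i hne)
    -- L j and K i are different components
    have hLK : ∀ j, L j ≠ Bc → ∀ i, K i ≠ K₀ → L j ≠ K i := by
      intro j hj i hi heq
      have hwjL : w j ∈ L j := CompIn.mem_self (hw j).1
      exact hK_ne_K₀_disj i hi (w j) (heq ▸ hwjL) (haK₀ j hj)
    -- choose two branches different from Bc
    have hLinj : Function.Injective L := by
      intro i j hij
      exact hwinj hij
    have hjj : ∃ j₁ j₂ : Fin 3, j₁ ≠ j₂ ∧ L j₁ ≠ Bc ∧ L j₂ ≠ Bc := by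
      by_cases h0 : L 0 = Bc
      · exact ⟨1, 2, by decide, fun h => by
          have := hLinj (h.trans h0.symm); simp at this,
          fun h => by have := hLinj (h.trans h0.symm); simp at this⟩
      · by_cases h1 : L 1 = Bc
        · exact ⟨0, 2, by decide, h0, fun h => by
            have := hLinj (h.trans h1.symm); simp at this⟩
        · exact ⟨0, 1, by decide, h0, h1⟩
    obtain ⟨j₁, j₂, hj₁₂, hj₁, hj₂⟩ := hjj
    -- construct the family
    set f' : Fin (n + 3) → V := fun i => if K i = K₀ then w j₁ else f i with hf'def
    refine ⟨Fin.snoc f' (w j₂), ?_, ?_⟩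
    · intro i
      refine Fin.lastCases ?_ ?_ i
      · rw [Fin.snoc_last]
        refine ⟨hL_sub j₂ hj₂ (CompIn.mem_self (hw j₂).1), ?_⟩
        rw [hLcompU j₂ hj₂]
        exact (hw j₂).2
      · intro i'
        rw [Fin.snoc_castSucc]
        by_cases hK : K i' = K₀
        · have hfi : f' i' = w j₁ := by rw [hf'def]; exact if_pos hK
          rw [hfi]
          refine ⟨hL_sub j₁ hj₁ (CompIn.mem_self (hw j₁).1), ?_⟩
          rw [hLcompU j₁ hj₁]
          exact (hw j₁).2
        · have hfi : f' i' = f i' := by rw [hf'def]; exact if_neg hK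
          rw [hfi]
          refine ⟨hK_sub_CU i' hK (CompIn.mem_self (hf i').1), ?_⟩
          rw [hKiU i' hK]
          exact (hf i').2
    · -- injectivity
      have hval : ∀ i : Fin (n + 3),
          CompIn G (C \ U) ((Fin.snoc f' (w j₂) : Fin (n + 4) → V) (Fin.castSucc i)) =
            if K i = K₀ then L j₁ else K i := by
        intro i
        rw [Fin.snoc_castSucc]
        by_cases hK : K i = K₀
        · have hfi : f' i = w j₁ := by rw [hf'def]; exact if_pos hK
          rw [hfi, if_pos hK]
          exact hLcompU j₁ hj₁
        · have hfi : f' i = f i := by rw [hf'def]; exact if_neg hK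
          rw [hfi, if_neg hK]
          exact hKiU i hK
      have hlast : CompIn G (C \ U) ((Fin.snoc f' (w j₂) : Fin (n + 4) → V) (Fin.last (n + 3))) = L j₂ := by
        rw [Fin.snoc_last]
        exact hLcompU j₂ hj₂
      have hL12 : L j₁ ≠ L j₂ := fun h => hj₁₂ (hLinj h)
      have hKinj : ∀ i i', K i = K i' → i = i' := fun i i' h => hfinj h
      intro i j hij
      simp only at hij
      rcases Fin.eq_castSucc_or_eq_last i with ⟨i', rfl⟩ | rfl <;>
        rcases Fin.eq_castSucc_or_eq_last j with ⟨j', rfl⟩ | rfl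
      · rw [hval i', hval j'] at hij
        by_cases hKi : K i' = K₀ <;> by_cases hKj : K j' = K₀
        · rw [hKinj i' j' (hKi.trans hKj.symm)]
        · rw [if_pos hKi, if_neg hKj] at hij
          exact absurd hij.symm (fun h => hLK j₁ hj₁ j' hKj h.symm)
        · rw [if_neg hKi, if_pos hKj] at hij
          exact absurd hij (fun h => hLK j₁ hj₁ i' hKi h.symm)
        · rw [if_neg hKi, if_neg hKj] at hij
          rw [hKinj i' j' hij]
      · rw [hval i', hlast] at hij
        by_cases hKi : K i' = K₀
        · rw [if_pos hKi] at hij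
          exact absurd hij hL12
        · rw [if_neg hKi] at hij
          exact absurd hij.symm (hLK j₂ hj₂ i' hKi)
      · rw [hval j', hlast] at hij
        by_cases hKj : K j' = K₀
        · rw [if_pos hKj] at hij
          exact absurd hij.symm hL12
        · rw [if_neg hKj] at hij
          exact absurd hij (hLK j₂ hj₂ j' hKj)
      · rfl

end KeyLemma
theorem stmt0 {V : Type*} (G : SimpleGraph V)
    (hlf : ∀ v : V, (G.neighborSet v).Finite)
    (S : Set V) (t : ℕ)
    (C : Set V) (x₀ : V) (hx₀ : x₀ ∈ S) (hC : C = Comp G S x₀) (hCinf : C.Infinite)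
    (T : Finset V) (hTne : T.Nonempty)
    (hTtri : ∀ x ∈ T, IsTrifurcation G S t x)
    (hTC : ∀ x ∈ T, x ∈ C)
    (hdisj : ∀ x ∈ T, ∀ x' ∈ T, x ≠ x' →
      Disjoint (Comp G (S ∩ GraphBall G x t) x) (Comp G (S ∩ GraphBall G x' t) x')) :
    AtLeastInfComps G (C \ ⋃ x ∈ T, Comp G (S ∩ GraphBall G x t) x) (T.card + 2) := by
  classical
  subst hC
  obtain ⟨n, hn⟩ : ∃ n, T.card = n + 1 :=
    ⟨T.card - 1, (Nat.succ_pred_eq_of_pos (Finset.card_pos.mpr hTne)).symm⟩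
  have hTC' : ∀ x ∈ T, x ∈ CompIn G S x₀ := by
    intro x hx
    have := hTC x hx
    rwa [comp_eq_compIn] at this
  have hdisj' : ∀ x ∈ T, ∀ x' ∈ T, x ≠ x' → Disjoint (Cb G S t x) (Cb G S t x') := by
    intro x hx x' hx' hne
    have := hdisj x hx x' hx' hne
    rw [comp_eq_compIn, comp_eq_compIn] at this
    exact this
  obtain ⟨f, hf, hfinj⟩ := key_lemma G S t x₀ n T hn hTtri hTC' hdisj'
  rw [hn]
  simp_rw [comp_eq_compIn]
  apply ALC
  exact ⟨f, hf, hfinj⟩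
end

section
/- Let G = (V,E) be a locally finite simple graph, S ⊆ V, t ∈ ℕ, W ⊆ V finite, and W' = ⋃_{w∈W} B(w, t+1). Let C be an infinite component of S and let T be a nonempty finite set of t-trifurcations of S with T ⊆ C ∩ W and dist(x,x') ≥ 2t+1 for all distinct x,x' ∈ T. Then the set C ∩ ∂W' has at least |T| + 2 elements. -/
set_option linter.unusedSectionVars false
set_option maxHeartbeats 1000000

section CompLemmas

variable {V : Type*} {G : SimpleGraph V} {U U' A : Set V} {a b c : V}
lemma comp_subset : Comp G U a ⊆ U := fun _ hy => hy.2.1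
lemma base_mem_of_mem (h : b ∈ Comp G U a) : a ∈ U := h.1
lemma mem_comp_self (h : a ∈ U) : a ∈ Comp G U a := ⟨h, h, SimpleGraph.Reachable.refl _⟩
lemma comp_adj (hb : b ∈ Comp G U a) (hc : c ∈ U) (hadj : G.Adj b c) :
    c ∈ Comp G U a := by
  obtain ⟨ha, hbU, hr⟩ := hb
  refine ⟨ha, hc, hr.trans (SimpleGraph.Adj.reachable ?_)⟩
  simpa [SimpleGraph.comap_adj] using hadj
lemma comp_eq_of_mem (h : b ∈ Comp G U a) : Comp G U b = Comp G U a := by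
  obtain ⟨ha, hbU, hr⟩ := h
  ext y
  constructor
  · rintro ⟨_, hy, hr2⟩
    exact ⟨ha, hy, hr.trans hr2⟩
  · rintro ⟨_, hy, hr2⟩
    exact ⟨hbU, hy, hr.symm.trans hr2⟩
lemma comp_eq_of_inter (hza : c ∈ Comp G U a) (hzb : c ∈ Comp G U b) :
    Comp G U a = Comp G U b := by
  rw [← comp_eq_of_mem hza, ← comp_eq_of_mem hzb]
lemma comp_subset_trans (ha : a ∈ U) (h : Comp G U a ⊆ U') :
    Comp G U a ⊆ Comp G U' a := by
  have key : ∀ {v w : U} (_ : (G.induce U).Walk v w),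
      (v : V) ∈ Comp G U a → (v : V) ∈ Comp G U' a → (w : V) ∈ Comp G U' a := by
    intro v w p
    induction p with
    | nil => exact fun _ h2 => h2
    | @cons u x w hadj q ih =>
      intro h1 h2
      have hadj' : G.Adj u x := by simpa [SimpleGraph.comap_adj] using hadj
      have hx1 : (x : V) ∈ Comp G U a := comp_adj h1 x.2 hadj'
      exact ih hx1 (comp_adj h2 (h hx1) hadj')
  rintro b ⟨_, hbU, hr⟩
  obtain ⟨p⟩ := hr
  exact key p (mem_comp_self ha) (mem_comp_self (h (mem_comp_self ha)))
lemma exists_boundary (hb : b ∈ Comp G U a) (haA : a ∈ A) (hbA : b ∉ A) :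
    ∃ v ∈ Comp G U a, v ∈ InnerBoundary G A := by
  obtain ⟨ha, hbU, hr⟩ := hb
  have key : ∀ {v w : U} (_ : (G.induce U).Walk v w),
      (v : V) ∈ Comp G U a → (v : V) ∈ A → (w : V) ∉ A →
      ∃ v' ∈ Comp G U a, v' ∈ InnerBoundary G A := by
    intro v w p
    induction p with
    | nil => exact fun _ h2 h3 => absurd h2 h3
    | @cons u x w hadj q ih =>
      intro h1 h2 h3
      have hadj' : G.Adj u x := by simpa [SimpleGraph.comap_adj] using hadj
      have hx1 : (x : V) ∈ Comp G U a := comp_adj h1 x.2 hadj'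
      by_cases hxA : (x : V) ∈ A
      · exact ih hx1 hxA h3
      · exact ⟨u, h1, h2, x, hxA, hadj'⟩
  obtain ⟨p⟩ := hr
  exact key p (mem_comp_self ha) haA hbA
end CompLemmas

section Abstract

variable {V : Type*} {G : SimpleGraph V} {S C : Set V} {K : V → Set V} {T₀ : Set V}

/-- Every component of `C \ Q` has a vertex adjacent to `Q`. -/
lemma attach_lemma (hCS : C ⊆ S) (hCcomp : ∀ y ∈ C, Comp G S y = C)
    {Q : Set V} (hQC : Q ⊆ C) {q : V} (hq : q ∈ Q) {y : V} (hy : y ∈ C \ Q) :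
    ∃ d ∈ Comp G (C \ Q) y, ∃ u ∈ Q, G.Adj d u := by
  have hqS : q ∈ S := hCS (hQC hq)
  have hyS : y ∈ S := hCS hy.1
  have hqy : q ∈ Comp G S y := by
    rw [hCcomp y hy.1]; exact hQC hq
  obtain ⟨_, _, hr⟩ := hqy
  have key : ∀ {v w : S} (_ : (G.induce S).Walk v w),
      (v : V) ∈ Comp G (C \ Q) y → (w : V) ∈ Q →
      ∃ d ∈ Comp G (C \ Q) y, ∃ u ∈ Q, G.Adj d u := by
    intro v w p
    induction p with
    | nil => exact fun h1 h2 => absurd h2 (comp_subset h1).2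
    | @cons u x w hadj q' ih =>
      intro h1 h2
      have hadj' : G.Adj u x := by simpa [SimpleGraph.comap_adj] using hadj
      by_cases hxQ : (x : V) ∈ Q
      · exact ⟨u, h1, x, hxQ, hadj'⟩
      · have huC : (u : V) ∈ C := (comp_subset h1).1
        have hxC : (x : V) ∈ C := by
          have : (x : V) ∈ Comp G S u := comp_adj (mem_comp_self (hCS huC)) x.2 hadj'
          rwa [hCcomp u huC] at this
        exact ih (comp_adj h1 ⟨hxC, hxQ⟩ hadj') h2
  obtain ⟨p⟩ := hr
  exact key p (mem_comp_self hy) hq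

variable (hCS : C ⊆ S) (hCcomp : ∀ y ∈ C, Comp G S y = C)
  (hTC : T₀ ⊆ C)
  (hKmem : ∀ x ∈ T₀, x ∈ K x)
  (hKC : ∀ x ∈ T₀, K x ⊆ C)
  (hKconn : ∀ x ∈ T₀, ∀ U' : Set V, K x ⊆ U' → K x ⊆ Comp G U' x)
  (hKdisj : ∀ x ∈ T₀, ∀ x' ∈ T₀, x ≠ x' → K x ∩ K x' = ∅)

include hCS hCcomp hTC hKmem hKC hKconn hKdisj

lemma mem_diff_K {x x' : V} (hx : x ∈ T₀) (hx' : x' ∈ T₀) (hne : x' ≠ x) :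
    x' ∈ C \ K x := by
  refine ⟨hTC hx', fun h => ?_⟩
  have := hKdisj x' hx' x hx hne
  exact absurd (Set.mem_inter (hKmem x' hx') h) (by rw [this]; exact Set.notMem_empty x')

lemma nest_lemma {x x'' z : V} (hx : x ∈ T₀) (hx'' : x'' ∈ T₀) (hne : x ≠ x'')
    (hz : z ∈ C \ K x) (hnF : x'' ∉ Comp G (C \ K x) z) :
    Comp G (C \ K x) z ⊆ Comp G (C \ K x'') x ∧ x ∈ Comp G (C \ K x'') x := by
  set F := Comp G (C \ K x) z with hF
  have hxCd : x ∈ C \ K x'' := by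
    refine ⟨hKC x hx (hKmem x hx), fun h => ?_⟩
    have := hKdisj x hx x'' hx'' hne
    exact absurd (Set.mem_inter (hKmem x hx) h) (by rw [this]; exact Set.notMem_empty x)
  have hxM : x ∈ Comp G (C \ K x'') x := mem_comp_self hxCd
  refine ⟨?_, hxM⟩
  -- K x'' ⊆ component of x'' in C \ K x
  have hKx''sub : K x'' ⊆ C \ K x := by
    intro u hu
    refine ⟨hKC x'' hx'' hu, fun h => ?_⟩
    have := hKdisj x hx x'' hx'' hne
    exact absurd (Set.mem_inter h hu) (by rw [this]; exact Set.notMem_empty u)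
  have hKx''comp : K x'' ⊆ Comp G (C \ K x) x'' := hKconn x'' hx'' _ hKx''sub
  -- F is disjoint from K x''
  have hFKx'' : F ∩ K x'' = ∅ := by
    rw [Set.eq_empty_iff_forall_notMem]
    rintro u ⟨huF, huK⟩
    have heq : F = Comp G (C \ K x) x'' := comp_eq_of_inter huF (hKx''comp huK)
    exact hnF (heq ▸ mem_comp_self (hKx''sub (hKmem x'' hx'')))
  have hFsub : F ⊆ C \ K x'' := by
    intro u hu
    refine ⟨(comp_subset hu).1, fun h => ?_⟩
    exact absurd (Set.mem_inter hu h) (by rw [hFKx'']; exact Set.notMem_empty u)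
  -- attach F to K x
  obtain ⟨d, hdF, u, huK, hadj⟩ := attach_lemma hCS hCcomp (hKC x hx) (hKmem x hx) hz
  have hKxsub : K x ⊆ C \ K x'' := by
    intro v hv
    refine ⟨hKC x hx hv, fun h => ?_⟩
    have := hKdisj x hx x'' hx'' hne
    exact absurd (Set.mem_inter hv h) (by rw [this]; exact Set.notMem_empty v)
  have hKxcomp : K x ⊆ Comp G (C \ K x'') x := hKconn x hx _ hKxsub
  have hdM : d ∈ Comp G (C \ K x'') x := comp_adj (hKxcomp huK) (hFsub hdF) hadj.symm
  have : F ⊆ Comp G (C \ K x'') d := by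
    rw [show F = Comp G (C \ K x) d from (comp_eq_of_mem hdF).symm]
    exact comp_subset_trans (comp_subset hdF) (by rw [comp_eq_of_mem hdF]; exact hFsub)
  rwa [comp_eq_of_mem hdM] at this

lemma cross_lemma {x x'' z z' w : V} (hx : x ∈ T₀) (hx'' : x'' ∈ T₀) (hne : x ≠ x'')
    (hz : z ∈ C \ K x)
    (hwF : w ∈ Comp G (C \ K x) z) (hwF' : w ∈ Comp G (C \ K x'') z')
    (hnF : x'' ∉ Comp G (C \ K x) z) (hnF' : x ∉ Comp G (C \ K x'') z') : False := by
  obtain ⟨hsub, hxM⟩ := nest_lemma hCS hCcomp hTC hKmem hKC hKconn hKdisj hx hx'' hne hz hnF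
  have : Comp G (C \ K x'') z' = Comp G (C \ K x'') x := comp_eq_of_inter hwF' (hsub hwF)
  rw [this] at hnF'
  exact hnF' hxM

lemma leaf_lemma_s1 (T' : Finset V) (hsub : ↑T' ⊆ T₀) (hcard : 2 ≤ T'.card) :
    ∃ x' ∈ T', ∃ xs ∈ T', xs ≠ x' ∧
      ∀ x'' ∈ T', x'' ≠ x' → x'' ∈ Comp G (C \ K x') xs := by
  classical
  set pairs := (T' ×ˢ T').filter (fun p => p.1 ≠ p.2) with hpairs
  have hne : pairs.Nonempty := by
    obtain ⟨a, ha, b, hb, hab⟩ := Finset.one_lt_card.mp hcard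
    exact ⟨(a, b), by simp [hpairs, ha, hb, hab]⟩
  obtain ⟨p, hp, hmax⟩ := pairs.exists_max_image
      (fun p => (T'.filter (· ∈ Comp G (C \ K p.1) p.2)).card) hne
  obtain ⟨x', xs⟩ := p
  simp only [hpairs, Finset.mem_filter, Finset.mem_product] at hp
  obtain ⟨⟨hx'T, hxsT⟩, hnexx⟩ := hp
  refine ⟨x', hx'T, xs, hxsT, Ne.symm hnexx, ?_⟩
  intro x'' hx''T hnex''
  by_contra hnot
  have hzs : xs ∈ C \ K x' :=
    mem_diff_K hCS hCcomp hTC hKmem hKC hKconn hKdisj (hsub hx'T) (hsub hxsT) (Ne.symm hnexx)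
  obtain ⟨hFsub, hx'M⟩ := nest_lemma hCS hCcomp hTC hKmem hKC hKconn hKdisj
    (hsub hx'T) (hsub hx''T) (fun h => hnex'' h.symm) hzs hnot
  have hssub : T'.filter (· ∈ Comp G (C \ K x') xs) ⊂
      T'.filter (· ∈ Comp G (C \ K x'') x') := by
    refine Finset.ssubset_iff_of_subset ?_ |>.mpr ?_
    · intro y hy
      simp only [Finset.mem_filter] at hy ⊢
      exact ⟨hy.1, hFsub hy.2⟩
    · refine ⟨x', ?_, ?_⟩
      · simp only [Finset.mem_filter]
        exact ⟨hx'T, hx'M⟩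
      · simp only [Finset.mem_filter, not_and]
        intro _
        intro hmem
        exact (comp_subset hmem).2 (hKmem x' (hsub hx'T))
  have hlt := Finset.card_lt_card hssub
  have hpmem : (x'', x') ∈ pairs := by
    simp [hpairs, hx''T, hx'T, hnex'']
  have := hmax (x'', x') hpmem
  simp only at this
  omega

lemma sum_d_lemma [DecidableEq V] :
    ∀ T' : Finset V, ↑T' ⊆ T₀ →
    ∑ x ∈ T', ((fun z => Comp G (C \ K x) z) '' ↑(T'.erase x)).ncard ≤ 2 * (T'.card - 1) := by
  classical
  intro T'
  induction T' using Finset.strongInduction with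
  | _ T' ih =>
    intro hsub
    by_cases hc2 : T'.card ≤ 1
    · have hz : ∀ x ∈ T', ((fun z => Comp G (C \ K x) z) '' ↑(T'.erase x)).ncard = 0 := by
        intro x hx
        have he : T'.erase x = ∅ := by
          rw [← Finset.card_eq_zero]
          have := Finset.card_erase_of_mem hx
          omega
        simp [he]
      rw [Finset.sum_congr rfl hz]
      simp
    · push_neg at hc2
      obtain ⟨x', hx'T, xs, hxsT, hxsne, hleaf⟩ := leaf_lemma_s1 hCS hCcomp hTC hKmem hKC hKconn hKdisj T' hsub hc2
      set T'' := T'.erase x' with hT''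
      have hT''sub : ↑T'' ⊆ T₀ := fun y hy => hsub (Finset.erase_subset _ _ hy)
      have hT''ss : T'' ⊂ T' := Finset.erase_ssubset hx'T
      have hIH := ih T'' hT''ss hT''sub
      have hdx' : ((fun z => Comp G (C \ K x') z) '' ↑(T'.erase x')).ncard ≤ 1 := by
        have himage : (fun z => Comp G (C \ K x') z) '' ↑(T'.erase x') ⊆
            {Comp G (C \ K x') xs} := by
          rintro E ⟨z, hz, rfl⟩
          simp only [Set.mem_singleton_iff]
          rw [Finset.coe_erase, Set.mem_diff, Set.mem_singleton_iff] at hz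
          exact comp_eq_of_mem (hleaf z (by exact_mod_cast hz.1) hz.2)
        calc ((fun z => Comp G (C \ K x') z) '' ↑(T'.erase x')).ncard
            ≤ ({Comp G (C \ K x') xs} : Set (Set V)).ncard :=
              Set.ncard_le_ncard himage (Set.finite_singleton _)
          _ = 1 := Set.ncard_singleton _
      have hkey : ∀ x'' ∈ T'',
          ((fun z => Comp G (C \ K x'') z) '' ↑(T'.erase x'')).ncard ≤
          ((fun z => Comp G (C \ K x'') z) '' ↑(T''.erase x'')).ncard +
          (if (∀ x₃ ∈ T''.erase x'', Comp G (C \ K x'') x₃ ≠ Comp G (C \ K x'') x')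
            then 1 else 0) := by
        intro x'' hx''
        have hx''ne : x'' ≠ x' := (Finset.mem_erase.mp hx'').1
        have hset : (↑(T'.erase x'') : Set V) = ↑(T''.erase x'') ∪ {x'} := by
          rw [hT'']
          ext y
          constructor
          · intro hy
            obtain ⟨hyne'', hyT⟩ := Finset.mem_erase.mp (Finset.mem_coe.mp hy)
            by_cases hy' : y = x'
            · exact Or.inr hy'
            · exact Or.inl (Finset.mem_coe.mpr (Finset.mem_erase.mpr
                ⟨hyne'', Finset.mem_erase.mpr ⟨hy', hyT⟩⟩))
          · intro hy
            rcases hy with hy | hy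
            · obtain ⟨h1, h2⟩ := Finset.mem_erase.mp (Finset.mem_coe.mp hy)
              obtain ⟨h3, h4⟩ := Finset.mem_erase.mp h2
              exact Finset.mem_coe.mpr (Finset.mem_erase.mpr ⟨h1, h4⟩)
            · have hyx : y = x' := hy
              subst hyx
              exact Finset.mem_coe.mpr (Finset.mem_erase.mpr ⟨Ne.symm hx''ne, hx'T⟩)
        rw [hset, Set.image_union, Set.image_singleton]
        have hfin1 : ((fun z => Comp G (C \ K x'') z) '' ↑(T''.erase x'')).Finite :=
          Set.Finite.image _ (Finset.finite_toSet _)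
        split_ifs with halone
        · calc ((fun z => Comp G (C \ K x'') z) '' ↑(T''.erase x'') ∪
              {Comp G (C \ K x'') x'}).ncard
              ≤ _ + _ := Set.ncard_union_le _ _
            _ = _ + 1 := by rw [Set.ncard_singleton]
        · push_neg at halone
          obtain ⟨x₃, hx₃, heq⟩ := halone
          have hmem : Comp G (C \ K x'') x' ∈
              (fun z => Comp G (C \ K x'') z) '' ↑(T''.erase x'') :=
            ⟨x₃, by exact_mod_cast hx₃, heq⟩
          rw [Set.union_eq_self_of_subset_right (Set.singleton_subset_iff.mpr hmem)]
          simp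
      have halonecard : (T''.filter (fun x'' => ∀ x₃ ∈ T''.erase x'',
          Comp G (C \ K x'') x₃ ≠ Comp G (C \ K x'') x')).card ≤ 1 := by
        rw [Finset.card_le_one]
        intro a ha b hb
        by_contra hab
        simp only [Finset.mem_filter] at ha hb
        have haT : a ∈ T₀ := hT''sub ha.1
        have hbT : b ∈ T₀ := hT''sub hb.1
        have hane : a ≠ x' := (Finset.mem_erase.mp ha.1).1
        have hbne : b ≠ x' := (Finset.mem_erase.mp hb.1).1
        have hx'Ca : x' ∈ C \ K a :=
          mem_diff_K hCS hCcomp hTC hKmem hKC hKconn hKdisj haT (hsub hx'T) (Ne.symm hane)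
        have hx'Cb : x' ∈ C \ K b :=
          mem_diff_K hCS hCcomp hTC hKmem hKC hKconn hKdisj hbT (hsub hx'T) (Ne.symm hbne)
        have hA : x' ∈ Comp G (C \ K a) x' := mem_comp_self hx'Ca
        have hB : x' ∈ Comp G (C \ K b) x' := mem_comp_self hx'Cb
        have hbA : b ∉ Comp G (C \ K a) x' := by
          intro h
          exact ha.2 b (Finset.mem_erase.mpr ⟨Ne.symm hab, hb.1⟩) (comp_eq_of_mem h)
        have haB : a ∉ Comp G (C \ K b) x' := by
          intro h
          exact hb.2 a (Finset.mem_erase.mpr ⟨hab, ha.1⟩) (comp_eq_of_mem h)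
        exact cross_lemma hCS hCcomp hTC hKmem hKC hKconn hKdisj haT hbT hab hx'Ca hA hB hbA haB
      have hsumite : ∑ x'' ∈ T'', (if (∀ x₃ ∈ T''.erase x'',
          Comp G (C \ K x'') x₃ ≠ Comp G (C \ K x'') x') then 1 else 0) =
          (T''.filter (fun x'' => ∀ x₃ ∈ T''.erase x'',
          Comp G (C \ K x'') x₃ ≠ Comp G (C \ K x'') x')).card := by
        rw [Finset.card_filter]
      have hc'' : T''.card = T'.card - 1 := Finset.card_erase_of_mem hx'T
      calc ∑ x ∈ T', ((fun z => Comp G (C \ K x) z) '' ↑(T'.erase x)).ncard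
          = ((fun z => Comp G (C \ K x') z) '' ↑(T'.erase x')).ncard +
            ∑ x ∈ T'', ((fun z => Comp G (C \ K x) z) '' ↑(T'.erase x)).ncard :=
            (Finset.add_sum_erase _ _ hx'T).symm
        _ ≤ 1 + ∑ x ∈ T'', (((fun z => Comp G (C \ K x) z) '' ↑(T''.erase x)).ncard +
            (if (∀ x₃ ∈ T''.erase x, Comp G (C \ K x) x₃ ≠ Comp G (C \ K x) x')
              then 1 else 0)) :=
            Nat.add_le_add hdx' (Finset.sum_le_sum hkey)
        _ = 1 + (∑ x ∈ T'', ((fun z => Comp G (C \ K x) z) '' ↑(T''.erase x)).ncard +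
            ∑ x'' ∈ T'', (if (∀ x₃ ∈ T''.erase x'',
              Comp G (C \ K x'') x₃ ≠ Comp G (C \ K x'') x') then 1 else 0)) := by
            rw [Finset.sum_add_distrib]
        _ ≤ 1 + (2 * (T''.card - 1) + 1) := by
            rw [hsumite]
            exact Nat.add_le_add_left (Nat.add_le_add hIH halonecard) 1
        _ ≤ 2 * (T'.card - 1) := by omega

end Abstract

section Ball
variable {V : Type*} {G : SimpleGraph V}

lemma mem_graphBall_self (x : V) (t : ℕ) : x ∈ GraphBall G x t := by
  simp [GraphBall]

lemma graphBall_finite (hlf : ∀ v : V, (G.neighborSet v).Finite) (x : V) (t : ℕ) :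
    (GraphBall G x t).Finite := by
  induction t generalizing x with
  | zero =>
    refine Set.Finite.subset (Set.finite_singleton x) ?_
    intro z hz
    simp only [GraphBall, Set.mem_setOf_eq, Nat.cast_zero, nonpos_iff_eq_zero] at hz
    simp [(SimpleGraph.edist_eq_zero_iff.mp hz).symm]
  | succ t ih =>
    refine Set.Finite.subset (Set.Finite.insert x
      (Set.Finite.biUnion (hlf x) (fun y _ => ih y))) ?_
    intro z hz
    simp only [GraphBall, Set.mem_setOf_eq] at hz
    by_cases hzx : z = x
    · simp [hzx]
    · have hne : G.edist x z ≠ ⊤ := by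
        intro h
        rw [h] at hz
        exact (ENat.coe_lt_top _).not_ge hz
      obtain ⟨p, hp⟩ := SimpleGraph.exists_walk_of_edist_ne_top hne
      cases p with
      | nil => exact absurd rfl (Ne.symm hzx)
      | @cons _ y _ hadj q =>
        have hlen : ((q.length + 1 : ℕ) : ℕ∞) ≤ ((t + 1 : ℕ) : ℕ∞) := by
          rw [show ((q.length + 1 : ℕ) : ℕ∞) = ((SimpleGraph.Walk.cons hadj q).length : ℕ∞) by
            simp [SimpleGraph.Walk.length_cons], hp]
          exact_mod_cast hz
        have hq : (q.length : ℕ) ≤ t := by exact_mod_cast Nat.succ_le_succ_iff.mp (by exact_mod_cast hlen)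
        refine Set.mem_insert_iff.mpr (Or.inr ?_)
        refine Set.mem_biUnion hadj ?_
        calc G.edist y z ≤ q.length := SimpleGraph.edist_le q
        _ ≤ (t : ℕ∞) := by exact_mod_cast hq

end Ball

theorem stmt1 {V : Type*} (G : SimpleGraph V)
    (hlf : ∀ v : V, (G.neighborSet v).Finite)
    (S : Set V) (t : ℕ) (W : Set V) (hW : W.Finite)
    (C : Set V) (x₀ : V) (hx₀ : x₀ ∈ S) (hC : C = Comp G S x₀) (hCinf : C.Infinite)
    (T : Finset V) (hTne : T.Nonempty)
    (hTtri : ∀ x ∈ T, IsTrifurcation G S t x)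
    (hTCW : ↑T ⊆ C ∩ W)
    (hdist : ∀ x ∈ T, ∀ x' ∈ T, x ≠ x' → (2 * t + 1 : ℕ) ≤ G.edist x x') :
    T.card + 2 ≤ (C ∩ InnerBoundary G (⋃ w ∈ W, GraphBall G w (t + 1))).ncard := by
  classical
  set W' := ⋃ w ∈ W, GraphBall G w (t + 1) with hW'
  set L := C ∩ InnerBoundary G W' with hLdef
  set K : V → Set V := fun x => Comp G (S ∩ GraphBall G x t) x with hK
  have hW'fin : W'.Finite :=
    Set.Finite.biUnion hW (fun w _ => graphBall_finite hlf w (t + 1))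
  have hCS : C ⊆ S := by rw [hC]; exact comp_subset
  have hCcomp : ∀ y ∈ C, Comp G S y = C := by
    intro y hy; rw [hC] at hy ⊢; exact comp_eq_of_mem hy
  have hTC : (↑T : Set V) ⊆ C := fun y hy => (hTCW hy).1
  have hTS : ∀ x ∈ T, x ∈ S := fun x hx => (hTtri x hx).1
  have hTball : ∀ x ∈ T, x ∈ S ∩ GraphBall G x t :=
    fun x hx => ⟨hTS x hx, mem_graphBall_self x t⟩
  have hKmem : ∀ x ∈ (↑T : Set V), x ∈ K x := fun x hx =>
    mem_comp_self (hTball x (Finset.mem_coe.mp hx))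
  have hKC : ∀ x ∈ (↑T : Set V), K x ⊆ C := by
    intro x hx
    have h1 : K x ⊆ Comp G S x :=
      comp_subset_trans (hTball x (Finset.mem_coe.mp hx))
        (fun y hy => (comp_subset hy).1)
    rwa [hCcomp x (hTC hx)] at h1
  have hKconn : ∀ x ∈ (↑T : Set V), ∀ U' : Set V, K x ⊆ U' → K x ⊆ Comp G U' x :=
    fun x hx U' h => comp_subset_trans (hTball x (Finset.mem_coe.mp hx)) h
  have hballdisj : ∀ x ∈ T, ∀ x' ∈ T, x ≠ x' →
      GraphBall G x t ∩ GraphBall G x' t = ∅ := by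
    intro x hx x' hx' hne
    rw [Set.eq_empty_iff_forall_notMem]
    rintro z ⟨hz1, hz2⟩
    simp only [GraphBall, Set.mem_setOf_eq] at hz1 hz2
    have h2 : G.edist z x' ≤ (t : ℕ∞) := by
      rw [SimpleGraph.edist_comm]; exact hz2
    have h3 : G.edist x x' ≤ ((2 * t : ℕ) : ℕ∞) := by
      push_cast
      calc G.edist x x' ≤ G.edist x z + G.edist z x' := SimpleGraph.edist_triangle
        _ ≤ (t : ℕ∞) + (t : ℕ∞) := add_le_add hz1 h2
        _ = 2 * (t : ℕ∞) := (two_mul _).symm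
    have h4 := hdist x hx x' hx' hne
    have h5 : (2 * t + 1 : ℕ) ≤ (2 * t : ℕ) := by exact_mod_cast le_trans h4 h3
    omega
  have hKdisj : ∀ x ∈ (↑T : Set V), ∀ x' ∈ (↑T : Set V), x ≠ x' → K x ∩ K x' = ∅ := by
    intro x hx x' hx' hne
    rw [Set.eq_empty_iff_forall_notMem]
    rintro z ⟨hz1, hz2⟩
    have hb1 : z ∈ GraphBall G x t := (comp_subset hz1).2
    have hb2 : z ∈ GraphBall G x' t := (comp_subset hz2).2
    have he := hballdisj x (Finset.mem_coe.mp hx) x' (Finset.mem_coe.mp hx') hne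
    rw [Set.eq_empty_iff_forall_notMem] at he
    exact he z ⟨hb1, hb2⟩
  -- trifurcation data
  have h3 : ∀ x : V, ∃ f : Fin 3 → V, x ∈ T →
      (∀ i, f i ∈ C \ K x ∧ (Comp G (C \ K x) (f i)).Infinite) ∧
      Function.Injective (fun i => Comp G (C \ K x) (f i)) := by
    intro x
    by_cases hx : x ∈ T
    · obtain ⟨hxS, hinf, f, hf1, hf2⟩ := hTtri x hx
      have hCx : Comp G S x = C := hCcomp x (hTC (Finset.mem_coe.mpr hx))
      rw [hCx] at hf1 hf2
      exact ⟨f, fun _ => ⟨hf1, hf2⟩⟩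
    · exact ⟨fun _ => x, fun h => absurd h hx⟩
  choose f hf using h3
  -- boundary points in infinite components
  have hLB : ∀ (x : V) (i : Fin 3), ∃ v : V, x ∈ T →
      v ∈ Comp G (C \ K x) (f x i) ∧ v ∈ L := by
    intro x i
    by_cases hx : x ∈ T
    · have hx' : x ∈ (↑T : Set V) := Finset.mem_coe.mpr hx
      obtain ⟨hmem, hinf⟩ := (hf x hx).1 i
      obtain ⟨d, hd, u, hu, hadj⟩ := attach_lemma hCS hCcomp (hKC x hx') (hKmem x hx') hmem
      have hub : u ∈ GraphBall G x t := (comp_subset hu).2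
      have hdb : d ∈ GraphBall G x (t + 1) := by
        simp only [GraphBall, Set.mem_setOf_eq] at hub ⊢
        calc G.edist x d ≤ G.edist x u + G.edist u d := SimpleGraph.edist_triangle
          _ ≤ (t : ℕ∞) + 1 :=
            add_le_add hub (le_of_eq (SimpleGraph.edist_eq_one_iff_adj.mpr hadj.symm))
          _ = ((t + 1 : ℕ) : ℕ∞) := by push_cast; rfl
      have hdW' : d ∈ W' := Set.mem_biUnion (hTCW hx').2 hdb
      have hEinf : (Comp G (C \ K x) d).Infinite := by
        rwa [comp_eq_of_mem hd]
      obtain ⟨e, he⟩ := (hEinf.diff hW'fin).nonempty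
      obtain ⟨v, hv1, hv2⟩ := exists_boundary he.1 hdW' he.2
      refine ⟨v, fun _ => ⟨?_, ?_, hv2⟩⟩
      · rwa [comp_eq_of_mem hd] at hv1
      · exact (comp_subset hv1).1
    · exact ⟨x, fun h => absurd h hx⟩
  choose ℓ hℓ using hLB
  set Free : V → Fin 3 → Prop := fun x i => ∀ y ∈ T, y ∉ Comp G (C \ K x) (f x i)
    with hFree
  set Fx : V → Finset V :=
    fun x => (Finset.univ.filter (fun i => Free x i)).image (fun i => ℓ x i) with hFx
  have hFxcard : ∀ x ∈ T, (Fx x).card =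
      (Finset.univ.filter (fun i => Free x i)).card := by
    intro x hx
    apply Finset.card_image_of_injOn
    intro i _ j _ hij
    have hij' : ℓ x i = ℓ x j := hij
    have h1 : ℓ x j ∈ Comp G (C \ K x) (f x i) := hij' ▸ (hℓ x i hx).1
    have h2 : ℓ x j ∈ Comp G (C \ K x) (f x j) := (hℓ x j hx).1
    exact (hf x hx).2 (comp_eq_of_inter h1 h2)
  have hnonfree : ∀ x ∈ T, 3 ≤ (Fx x).card +
      ((fun z => Comp G (C \ K x) z) '' ↑(T.erase x)).ncard := by
    intro x hx
    have hx' : x ∈ (↑T : Set V) := Finset.mem_coe.mpr hx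
    have hsplit : (Finset.univ.filter (fun i => Free x i)).card +
        (Finset.univ.filter (fun i => ¬ Free x i)).card = 3 := by
      rw [Finset.card_filter_add_card_filter_not]
      simp
    have himg : (Finset.univ.filter (fun i => ¬ Free x i)).card ≤
        ((fun z => Comp G (C \ K x) z) '' ↑(T.erase x)).ncard := by
      have hinj : ((Finset.univ.filter (fun i => ¬ Free x i)).image
          (fun i => Comp G (C \ K x) (f x i))).card =
          (Finset.univ.filter (fun i => ¬ Free x i)).card :=
        Finset.card_image_of_injOn (fun i _ j _ h => (hf x hx).2 h)
      rw [← hinj, ← Set.ncard_coe_finset]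
      apply Set.ncard_le_ncard _ (Set.Finite.image _ (Finset.finite_toSet _))
      intro E hE
      simp only [Finset.coe_image, Set.mem_image, Finset.mem_coe, Finset.mem_filter] at hE
      obtain ⟨i, ⟨_, hnf⟩, rfl⟩ := hE
      simp only [hFree] at hnf
      push_neg at hnf
      obtain ⟨y, hyT, hymem⟩ := hnf
      have hyx : y ≠ x := by
        intro h
        subst h
        exact (comp_subset hymem).2 (hKmem y (Finset.mem_coe.mpr hyT))
      exact ⟨y, by simp [Finset.mem_erase, hyx, hyT], comp_eq_of_mem hymem⟩
    rw [hFxcard x hx]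
    omega
  have hdisjF : ∀ x ∈ T, ∀ x' ∈ T, x ≠ x' → Disjoint (Fx x) (Fx x') := by
    intro x hx x' hx' hne
    rw [Finset.disjoint_left]
    intro v hv hv'
    simp only [hFx, Finset.mem_image, Finset.mem_filter] at hv hv'
    obtain ⟨i, ⟨_, hfree⟩, rfl⟩ := hv
    obtain ⟨j, ⟨_, hfree'⟩, heq⟩ := hv'
    have h1 : ℓ x i ∈ Comp G (C \ K x) (f x i) := (hℓ x i hx).1
    have h2 : ℓ x i ∈ Comp G (C \ K x') (f x' j) := heq ▸ (hℓ x' j hx').1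
    exact cross_lemma hCS hCcomp hTC hKmem hKC hKconn hKdisj
      (Finset.mem_coe.mpr hx) (Finset.mem_coe.mpr hx') hne
      ((hf x hx).1 i).1 h1 h2 (hfree x' hx') (hfree' x hx)
  set P := T.biUnion Fx with hP
  have hPcard : P.card = ∑ x ∈ T, (Fx x).card := Finset.card_biUnion hdisjF
  have hsumd := sum_d_lemma hCS hCcomp hTC hKmem hKC hKconn hKdisj T (subset_refl _)
  have hsum3 : 3 * T.card ≤ ∑ x ∈ T, (Fx x).card +
      ∑ x ∈ T, ((fun z => Comp G (C \ K x) z) '' ↑(T.erase x)).ncard := by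
    calc 3 * T.card = ∑ _x ∈ T, 3 := by rw [Finset.sum_const, smul_eq_mul, mul_comm]
      _ ≤ ∑ x ∈ T, ((Fx x).card +
          ((fun z => Comp G (C \ K x) z) '' ↑(T.erase x)).ncard) :=
        Finset.sum_le_sum hnonfree
      _ = _ := Finset.sum_add_distrib
  have hTpos : 1 ≤ T.card := Finset.card_pos.mpr hTne
  have hPbound : T.card + 2 ≤ P.card := by omega
  have hPL : (↑P : Set V) ⊆ L := by
    intro v hv
    simp only [hP, Finset.coe_biUnion, Set.mem_iUnion, Finset.mem_coe] at hv
    obtain ⟨x, hx, hvx⟩ := hv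
    simp only [hFx, Finset.mem_image, Finset.mem_filter] at hvx
    obtain ⟨i, _, rfl⟩ := hvx
    exact (hℓ x i hx).2
  have hLfin : L.Finite := hW'fin.subset (fun y hy => hy.2.1)
  calc T.card + 2 ≤ P.card := hPbound
    _ = (↑P : Set V).ncard := (Set.ncard_coe_finset P).symm
    _ ≤ L.ncard := Set.ncard_le_ncard hPL hLfin
end

section
/- Let G = (V,E) be a locally finite simple graph, t ∈ ℕ, and let m, m' ∈ ℕ satisfy |B(x,2t+1)| ≤ m and |B(x,t+1)| ≤ m' for every x ∈ V. Then for every S ⊆ V and every finite W ⊆ V, the number of t-trifurcations of S lying in W is at most m · m' · |∂W|. -/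
namespace BK

variable {V : Type*} (G : SimpleGraph V)

def Rel (S : Set V) (a b : V) : Prop := a ∈ S ∧ b ∈ S ∧ G.Adj a b

def Conn (S : Set V) (x y : V) : Prop := Relation.ReflTransGen (Rel G S) x y

variable {G} {S S' : Set V} {x y z : V}

lemma Conn.refl : Conn G S x x := Relation.ReflTransGen.refl

lemma Conn.mem_right (hx : x ∈ S) (h : Conn G S x y) : y ∈ S := by
  induction h with
  | refl => exact hx
  | tail _ h2 _ => exact h2.2.1

lemma Rel.symm' : Rel G S a b → Rel G S b a := fun ⟨h1, h2, h3⟩ => ⟨h2, h1, h3.symm⟩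

lemma Conn.symm (h : Conn G S x y) : Conn G S y x :=
  by
    induction h with
    | refl => exact Relation.ReflTransGen.refl
    | tail _ h2 ih => exact Relation.ReflTransGen.head (Rel.symm' h2) ih

lemma Conn.trans (h : Conn G S x y) (h' : Conn G S y z) : Conn G S x z :=
  Relation.ReflTransGen.trans h h'

lemma Conn.mono (hss : S ⊆ S') (h : Conn G S x y) : Conn G S' x y :=
  Relation.ReflTransGen.mono (fun _ _ ⟨h1, h2, h3⟩ => ⟨hss h1, hss h2, h3⟩) _ _ h

lemma mem_comp_iff (hx : x ∈ S) : y ∈ Comp G S x ↔ Conn G S x y := by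
  constructor
  · rintro ⟨hx', hy, hr⟩
    rw [SimpleGraph.reachable_iff_reflTransGen] at hr
    have := Relation.ReflTransGen.lift (r := (G.induce S).Adj)
      (p := Rel G S) (Subtype.val)
      (fun a b hab => ⟨a.2, b.2, hab⟩) _ _ hr
    exact this
  · intro h
    induction h with
    | refl => exact ⟨hx, hx, SimpleGraph.Reachable.refl _⟩
    | tail h1 h2 ih =>
      obtain ⟨_, hbS, hr⟩ := ih
      exact ⟨hx, h2.2.1, hr.trans (SimpleGraph.Adj.reachable h2.2.2)⟩

lemma mem_comp_self (hx : x ∈ S) : x ∈ Comp G S x := (mem_comp_iff hx).2 Conn.refl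

lemma comp_subset : Comp G S x ⊆ S := fun _ ⟨_, hy, _⟩ => hy

lemma comp_empty_of_not_mem (hx : x ∉ S) : Comp G S x = ∅ := by
  ext y; simp only [Comp, Set.mem_setOf_eq, Set.mem_empty_iff_false, iff_false]
  rintro ⟨hx', _, _⟩; exact hx hx'

lemma conn_of_mem_comp (hx : x ∈ S) (hy : y ∈ Comp G S x) : Conn G S x y :=
  (mem_comp_iff hx).1 hy

lemma comp_eq_of_mem (hx : x ∈ S) (hy : y ∈ Comp G S x) : Comp G S y = Comp G S x := by
  have hyS : y ∈ S := comp_subset hy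
  have hxy := conn_of_mem_comp hx hy
  ext z
  rw [mem_comp_iff hx, mem_comp_iff hyS]
  exact ⟨fun h => hxy.trans h, fun h => hxy.symm.trans h⟩

lemma comp_eq_of_inter (hx : x ∈ S) (hy : y ∈ S)
    (h : (Comp G S x ∩ Comp G S y).Nonempty) : Comp G S x = Comp G S y := by
  obtain ⟨z, hzx, hzy⟩ := h
  rw [← comp_eq_of_mem hx hzx, ← comp_eq_of_mem hy hzy]

lemma conn_restrict (hx : x ∈ S) (h : Conn G S x y) : Conn G (Comp G S x) x y := by
  induction h with
  | refl => exact Conn.refl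
  | @tail b c h1 h2 ih =>
    have hb : b ∈ Comp G S x := (mem_comp_iff hx).2 h1
    have hc : c ∈ Comp G S x := (mem_comp_iff hx).2 (h1.tail h2)
    exact ih.tail ⟨hb, hc, h2.2.2⟩

/-- Connectivity within a component. -/
lemma conn_in_comp {v : V} (hv : v ∈ S) (hy : y ∈ Comp G S v) (hz : z ∈ Comp G S v) :
    Conn G (Comp G S v) y z := by
  have h1 : Conn G (Comp G S v) v y := conn_restrict hv (conn_of_mem_comp hv hy)
  have h2 : Conn G (Comp G S v) v z := conn_restrict hv (conn_of_mem_comp hv hz)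
  exact h1.symm.trans h2


variable {V : Type*} {G : SimpleGraph V} {S W : Set V} {x y z w : V} {r t n : ℕ}

lemma mem_ball_self : x ∈ GraphBall G x r := by
  simp [GraphBall, SimpleGraph.edist_self]

lemma ball_mono (h : r ≤ n) : GraphBall G x r ⊆ GraphBall G x n := by
  intro y hy
  have hy' : G.edist x y ≤ (r : ℕ∞) := hy
  have : (r : ℕ∞) ≤ (n : ℕ∞) := by exact_mod_cast h
  exact le_trans hy' this

lemma mem_ball_comm : y ∈ GraphBall G x r ↔ x ∈ GraphBall G y r := by
  unfold GraphBall
  rw [Set.mem_setOf_eq, Set.mem_setOf_eq, SimpleGraph.edist_comm]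

lemma mem_ball_succ_of_adj (hy : y ∈ GraphBall G x r) (h : G.Adj y z) :
    z ∈ GraphBall G x (r + 1) := by
  have h1 : G.edist x z ≤ G.edist x y + G.edist y z := SimpleGraph.edist_triangle
  have h2 : G.edist y z ≤ 1 := by
    rw [SimpleGraph.edist_eq_one_iff_adj.2 h]
  calc G.edist x z ≤ G.edist x y + 1 := le_trans h1 (add_le_add_right h2 _)
    _ ≤ (r : ℕ∞) + 1 := add_le_add hy le_rfl
    _ = ((r + 1 : ℕ) : ℕ∞) := by push_cast; ring

lemma ball_subset_of_mem (hy : y ∈ GraphBall G x r) :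
    GraphBall G y n ⊆ GraphBall G x (r + n) := by
  intro z hz
  have h1 : G.edist x z ≤ G.edist x y + G.edist y z := SimpleGraph.edist_triangle
  calc G.edist x z ≤ (r : ℕ∞) + (n : ℕ∞) := le_trans h1 (add_le_add hy hz)
    _ = ((r + n : ℕ) : ℕ∞) := by push_cast; ring

lemma ball_step (hz : z ∈ GraphBall G x (n + 1)) :
    z = x ∨ ∃ y, y ∈ GraphBall G x n ∧ G.Adj y z := by
  have hz' : G.edist x z ≤ ((n + 1 : ℕ) : ℕ∞) := hz
  have hne : G.edist x z ≠ ⊤ := by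
    intro h; rw [h] at hz'
    exact absurd (top_le_iff.1 hz') (ENat.coe_ne_top _)
  obtain ⟨p, hp⟩ := SimpleGraph.exists_walk_of_edist_ne_top hne
  have hplen : p.length ≤ n + 1 := by
    rw [← hp] at hz'; exact_mod_cast hz'
  cases hpr : p.reverse with
  | nil =>
    left
    have h0 : p.length = 0 := by
      have := congrArg SimpleGraph.Walk.length hpr
      simpa using this
    exact (SimpleGraph.Walk.eq_of_length_eq_zero h0).symm
  | @cons _ b _ hadj q =>
    right
    have hlen : q.length + 1 = p.length := by
      have := congrArg SimpleGraph.Walk.length hpr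
      simpa using this.symm
    refine ⟨b, ?_, hadj.symm⟩
    have : G.edist x b ≤ q.reverse.length := SimpleGraph.edist_le q.reverse
    rw [SimpleGraph.Walk.length_reverse] at this
    refine le_trans this ?_
    exact_mod_cast Nat.cast_le.2 (by omega)

lemma ball_finite (hlf : ∀ v : V, (G.neighborSet v).Finite) (x : V) (r : ℕ) :
    (GraphBall G x r).Finite := by
  induction r with
  | zero =>
    apply Set.Finite.subset (Set.finite_singleton x)
    intro y hy
    have h0 : G.edist x y ≤ ((0 : ℕ) : ℕ∞) := hy
    have : G.edist x y = 0 := le_antisymm (by exact_mod_cast h0) zero_le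
    simp [(SimpleGraph.edist_eq_zero_iff.1 this).symm]
  | succ n ih =>
    have hsub : GraphBall G x (n + 1) ⊆
        {x} ∪ ⋃ y ∈ GraphBall G x n, G.neighborSet y := by
      intro z hz
      rcases ball_step hz with h | ⟨b, hb, hadj⟩
      · left; simp [h]
      · right; exact Set.mem_biUnion hb hadj
    exact Set.Finite.subset ((Set.finite_singleton x).union (ih.biUnion fun y _ => hlf y)) hsub



/-- Crossing lemma: a connection within `A` from inside `W` to outside `W`
meets the inner boundary of `W` inside `A`. -/
lemma exists_boundary_of_conn {A : Set V} (hconn : Conn G A w z)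
    (hz : z ∉ W) : ∀ _ : w ∈ W, ∃ b, b ∈ A ∧ b ∈ InnerBoundary G W := by
  induction hconn using Relation.ReflTransGen.head_induction_on with
  | refl => exact fun hw => absurd hw hz
  | @head a c hac hcz ih =>
    intro hw
    by_cases hc : c ∈ W
    · exact ih hc
    · exact ⟨a, hac.1, hw, c, hc, hac.2.2⟩

/-- If `x ∈ W`, `z ∉ W`, `edist x z ≤ n`, there is an inner-boundary point within distance `n`. -/
lemma exists_boundary_near (hn : G.edist x z ≤ (n : ℕ∞)) (hx : x ∈ W) (hz : z ∉ W) :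
    ∃ b, b ∈ InnerBoundary G W ∧ b ∈ GraphBall G x n := by
  induction n generalizing x with
  | zero =>
    exfalso
    have h0 : G.edist x z = 0 := le_antisymm (by exact_mod_cast hn) zero_le
    exact hz ((SimpleGraph.edist_eq_zero_iff.1 h0) ▸ hx)
  | succ k ih =>
    have hne : G.edist x z ≠ ⊤ := fun h => absurd (top_le_iff.1 (h ▸ hn)) (ENat.coe_ne_top _)
    obtain ⟨p, hp⟩ := SimpleGraph.exists_walk_of_edist_ne_top hne
    have hplen : p.length ≤ k + 1 := by
      rw [← hp] at hn; exact_mod_cast hn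
    cases p with
    | nil => exact absurd hx hz
    | @cons _ y _ hadj q =>
      by_cases hyW : y ∈ W
      · have hq : G.edist y z ≤ (k : ℕ∞) := by
          refine le_trans (SimpleGraph.edist_le q) ?_
          have : q.length ≤ k := by
            have := hplen; simp [SimpleGraph.Walk.length_cons] at this; omega
          exact_mod_cast this
        obtain ⟨b, hb, hbball⟩ := ih hq hyW
        refine ⟨b, hb, ?_⟩
        have h1 : y ∈ GraphBall G x 1 := by
          have : G.edist x y ≤ 1 := le_of_eq (SimpleGraph.edist_eq_one_iff_adj.2 hadj)
          exact this
        have := ball_subset_of_mem (n := k) h1 hbball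
        exact ball_mono (by omega) this
      · exact ⟨x, ⟨hx, y, hyW, hadj⟩, mem_ball_self⟩


section CoreBranch

variable (G) (S) (t)

/-- The core `C_{x,t}(S)`. -/
def core (x : V) : Set V := Comp G (S ∩ GraphBall G x t) x

/-- The cluster of `x` minus its core. -/
def SxS (x : V) : Set V := Comp G S x \ core G S t x

/-- `E` is a component ("branch") of the cluster of `x` minus its core. -/
def IsBr (x : V) (E : Set V) : Prop := ∃ v ∈ SxS G S t x, E = Comp G (SxS G S t x) v

variable {G S t}

lemma mem_core_self (hx : x ∈ S) : x ∈ core G S t x :=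
  mem_comp_self ⟨hx, mem_ball_self⟩

lemma core_subset_ball : core G S t x ⊆ GraphBall G x t :=
  fun _ hy => (comp_subset hy).2

lemma core_subset_comp (hx : x ∈ S) : core G S t x ⊆ Comp G S x := by
  intro y hy
  have h := conn_of_mem_comp (show x ∈ S ∩ GraphBall G x t from ⟨hx, mem_ball_self⟩) hy
  exact (mem_comp_iff hx).2 (h.mono Set.inter_subset_left)

lemma conn_in_core (hx : x ∈ S) (hy : y ∈ core G S t x) (hz : z ∈ core G S t x) :
    Conn G (core G S t x) y z :=
  conn_in_comp (show x ∈ S ∩ GraphBall G x t from ⟨hx, mem_ball_self⟩) hy hz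

/-- From any vertex of the cluster outside `K ∋ x` one can reach, within the cluster minus `K`,
a vertex adjacent to `K`. -/
lemma reach_from_core (hx : x ∈ S) (K : Set V) (hxK : x ∈ K)
    {v : V} (hconn : Conn G S x v) :
    v ∈ Comp G S x \ K →
    ∃ u w, u ∈ K ∧ w ∈ Comp G S x \ K ∧ G.Adj u w ∧ Conn G (Comp G S x \ K) w v := by
  induction hconn with
  | refl => exact fun hv => absurd hxK hv.2
  | @tail b c h1 h2 ih =>
    intro hv
    have hc : c ∈ Comp G S x \ K := hv
    have hbC : b ∈ Comp G S x := (mem_comp_iff hx).2 h1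
    by_cases hbK : b ∈ K
    · exact ⟨b, c, hbK, hc, h2.2.2, Conn.refl⟩
    · obtain ⟨u, w, hu, hw, hadj, hcw⟩ := ih ⟨hbC, hbK⟩
      exact ⟨u, w, hu, hw, hadj, hcw.tail ⟨⟨hbC, hbK⟩, hc, h2.2.2⟩⟩

/-- Every branch of `x` contains a vertex adjacent to the core of `x`. -/
lemma branch_adj_core (hx : x ∈ S) {E : Set V} (hE : IsBr G S t x E) :
    ∃ u w, u ∈ core G S t x ∧ w ∈ E ∧ G.Adj u w := by
  obtain ⟨v, hv, rfl⟩ := hE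
  obtain ⟨u, w, hu, hw, hadj, hcw⟩ :=
    reach_from_core hx (core G S t x) (mem_core_self hx)
      (conn_of_mem_comp hx hv.1) hv
  refine ⟨u, w, hu, ?_, hadj⟩
  exact (mem_comp_iff hv).2 hcw.symm

lemma branch_subset (hE : IsBr G S t x E) : E ⊆ SxS G S t x := by
  obtain ⟨v, hv, rfl⟩ := hE
  exact comp_subset

lemma branch_meets_ball (hx : x ∈ S) {E : Set V} (hE : IsBr G S t x E) :
    ∃ w ∈ E, w ∈ GraphBall G x (t + 1) := by
  obtain ⟨u, w, hu, hw, hadj⟩ := branch_adj_core hx hE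
  exact ⟨w, hw, mem_ball_succ_of_adj (core_subset_ball hu) hadj⟩

/-- Every infinite branch of `x` with `B(x,t+1) ⊆ W` (`W` finite) meets the inner boundary. -/
lemma branch_meets_boundary (hx : x ∈ S) {E : Set V} (hE : IsBr G S t x E)
    (hEinf : E.Infinite) (hball : GraphBall G x (t + 1) ⊆ W) (hW : W.Finite) :
    ∃ b, b ∈ E ∧ b ∈ InnerBoundary G W := by
  obtain ⟨w, hwE, hwball⟩ := branch_meets_ball hx hE
  obtain ⟨z, hzE, hzW⟩ := Set.Infinite.exists_notMem_finite hEinf hW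
  obtain ⟨v, hv, hEeq⟩ := hE
  have hconn : Conn G E w z := by
    subst hEeq
    exact conn_in_comp hv hwE hzE
  exact exists_boundary_of_conn hconn hzW (hball hwball)

end CoreBranch

section Structural

variable {x x' : V} {E : Set V}

/-- memberships in a union, for readability -/
lemma branch_comp_eq (hE : IsBr G S t x E) (hz : z ∈ E) :
    Comp G (SxS G S t x) z = E := by
  obtain ⟨v, hv, rfl⟩ := hE
  exact comp_eq_of_mem hv hz

lemma branch_not_mem_self (hx : x ∈ S) (hE : IsBr G S t x E) : x ∉ E :=
  fun h => (branch_subset hE h).2 (mem_core_self hx)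

/-- Main placement lemma: if `x'` is in the cluster of `x`, their `t`-balls are disjoint,
and `E` is a branch of `x'` avoiding `x`, then `E ∪ core x'` is contained in the branch
of `x` containing `x'`. -/
lemma branch_place (hx : x ∈ S) (hcl : x' ∈ Comp G S x)
    (hdisj : ∀ z, z ∈ GraphBall G x t → z ∈ GraphBall G x' t → False)
    (hE : IsBr G S t x' E) (hxE : x ∉ E) :
    E ∪ core G S t x' ⊆ Comp G (SxS G S t x) x' := by
  have hx'S : x' ∈ S := comp_subset hcl
  have hCeq : Comp G S x' = Comp G S x := comp_eq_of_mem hx hcl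
  have hxnotcore' : x ∉ core G S t x' :=
    fun h => hdisj x mem_ball_self (core_subset_ball h)
  have hx'notcore : x' ∉ core G S t x :=
    fun h => hdisj x' (core_subset_ball h) mem_ball_self
  have hx'Sx : x' ∈ SxS G S t x := ⟨hcl, hx'notcore⟩
  have hEC : E ⊆ Comp G S x := fun z hz => by
    have := (branch_subset hE hz).1
    rwa [hCeq] at this
  have hcorex'C : core G S t x' ⊆ Comp G S x := fun z hz => by
    have := core_subset_comp hx'S hz
    rwa [hCeq] at this
  -- the core of x is contained in SxS x' (it avoids core x')
  have hcorexSx' : core G S t x ⊆ SxS G S t x' := by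
    intro u hu
    refine ⟨?_, fun h => hdisj u (core_subset_ball hu) (core_subset_ball h)⟩
    rw [hCeq]
    exact core_subset_comp hx hu
  -- E avoids the core of x
  have hEcorex : ∀ z ∈ E, z ∉ core G S t x := by
    intro z hz hzc
    apply hxE
    have hconn : Conn G (core G S t x) x z := conn_in_core hx (mem_core_self hx) hzc
    have hconn' : Conn G (SxS G S t x') x z := hconn.mono hcorexSx'
    have hxSx' : x ∈ SxS G S t x' := hcorexSx' (mem_core_self hx)
    have hzE := hz
    rw [← branch_comp_eq hE hz]
    exact (mem_comp_iff ((branch_subset hE) hz)).2 hconn'.symm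
  -- connectivity of the union
  obtain ⟨u, w, hu, hw, hadj⟩ := branch_adj_core hx'S hE
  set U : Set V := E ∪ core G S t x' with hU
  have hconnU : ∀ z ∈ U, Conn G U x' z := by
    intro z hz
    have hcore_conn : ∀ c ∈ core G S t x', Conn G U x' c := fun c hc =>
      (conn_in_core hx'S (mem_core_self hx'S) hc).mono Set.subset_union_right
    rcases hz with hzE | hzc
    · have h1 : Conn G U x' u := hcore_conn u hu
      have h2 : Conn G U u w :=
        Relation.ReflTransGen.single ⟨Set.mem_union_right _ hu, Set.mem_union_left _ hw, hadj⟩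
      have h3 : Conn G E w z := by
        obtain ⟨v, hv, rfl⟩ := hE
        exact conn_in_comp hv hw hzE
      exact (h1.trans h2).trans (h3.mono Set.subset_union_left)
    · exact hcore_conn z hzc
  -- the union is inside SxS x
  have hUsub : U ⊆ SxS G S t x := by
    rintro z (hzE | hzc)
    · exact ⟨hEC hzE, hEcorex z hzE⟩
    · exact ⟨hcorex'C hzc, fun h => hdisj z (core_subset_ball h) (core_subset_ball hzc)⟩
  intro z hz
  exact (mem_comp_iff hx'Sx).2 ((hconnU z hz).mono hUsub)

lemma mem_branch_self (hx' : x' ∈ SxS G S t x) : x' ∈ Comp G (SxS G S t x) x' :=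
  mem_comp_self hx'

/-- The branch of `x` containing `z` is `IsBr`. -/
lemma isBr_comp (hz : z ∈ SxS G S t x) : IsBr G S t x (Comp G (SxS G S t x) z) :=
  ⟨z, hz, rfl⟩


/-- A branch of `x'` avoiding `x` also avoids the core of `x` (same hypotheses as
`branch_place`). -/
lemma branch_avoid_core (hx : x ∈ S) (hcl : x' ∈ Comp G S x)
    (hdisj : ∀ z, z ∈ GraphBall G x t → z ∈ GraphBall G x' t → False)
    (hE : IsBr G S t x' E) (hxE : x ∉ E) :
    ∀ z ∈ E, z ∉ core G S t x := by
  have hx'S : x' ∈ S := comp_subset hcl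
  have hCeq : Comp G S x' = Comp G S x := comp_eq_of_mem hx hcl
  have hcorexSx' : core G S t x ⊆ SxS G S t x' := by
    intro u hu
    refine ⟨?_, fun h => hdisj u (core_subset_ball hu) (core_subset_ball h)⟩
    rw [hCeq]
    exact core_subset_comp hx hu
  intro z hz hzc
  apply hxE
  have hconn : Conn G (core G S t x) x z := conn_in_core hx (mem_core_self hx) hzc
  have hconn' : Conn G (SxS G S t x') x z := hconn.mono hcorexSx'
  rw [← branch_comp_eq hE hz]
  exact (mem_comp_iff ((branch_subset hE) hz)).2 hconn'.symm

end Structural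

/-- The Burton–Keane injection: separated trifurcations whose `(t+1)`-balls lie in the finite
set `W` inject into the inner boundary of `W`. -/
lemma bk_injection {G : SimpleGraph V} {S W : Set V} {t : ℕ} (hW : W.Finite) (T : Finset V)
    (htri : ∀ x ∈ T, IsTrifurcation G S t x)
    (hballW : ∀ x ∈ T, GraphBall G x (t+1) ⊆ W)
    (hsep : ∀ x ∈ T, ∀ x' ∈ T, x ≠ x' →
      ∀ z, z ∈ GraphBall G x t → z ∈ GraphBall G x' t → False) :
    ∃ β : V → V, Set.InjOn β ↑T ∧ ∀ x ∈ T, β x ∈ InnerBoundary G W := by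
  classical
  have hxS : ∀ x ∈ T, x ∈ S := fun x hx => (htri x hx).1
  have hTfin : ∀ A : Set V, (↑T ∩ A : Set V).Finite :=
    fun A => T.finite_toSet.inter_of_left A
  -- three distinct infinite branches at each trifurcation
  have haux : ∀ x ∈ T, ∃ f : Fin 3 → V,
      (∀ i, f i ∈ SxS G S t x ∧ (Comp G (SxS G S t x) (f i)).Infinite) ∧
      Function.Injective (fun i => Comp G (SxS G S t x) (f i)) :=
    fun x hx => (htri x hx).2.2
  have hbr_eq_or_disj : ∀ x : V, ∀ A B : Set V, IsBr G S t x A → IsBr G S t x B →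
      (A ∩ B).Nonempty → A = B := by
    rintro x A B ⟨a, ha, rfl⟩ ⟨b, hb, rfl⟩ hne
    exact comp_eq_of_inter ha hb hne
  -- one can always pick an infinite branch avoiding one given set and one given vertex
  have pick_branch : ∀ x ∈ T, ∀ A : Set V, ∀ yv : V,
      ∃ E', IsBr G S t x E' ∧ E'.Infinite ∧ E' ≠ A ∧ yv ∉ E' := by
    intro x hx A yv
    obtain ⟨f, hf, hinj⟩ := haux x hx
    set g : Fin 3 → Set V := fun i => Comp G (SxS G S t x) (f i) with hg
    have hbr : ∀ i, IsBr G S t x (g i) := fun i => isBr_comp (hf i).1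
    have huniqA : ∀ i j : Fin 3, g i = A → g j = A → i = j :=
      fun i j hi hj => hinj (hi.trans hj.symm)
    have huniqy : ∀ i j : Fin 3, yv ∈ g i → yv ∈ g j → i = j :=
      fun i j hi hj => hinj (hbr_eq_or_disj x _ _ (hbr i) (hbr j) ⟨yv, hi, hj⟩)
    by_contra hcon
    push_neg at hcon
    have h3 : ∀ i : Fin 3, g i = A ∨ yv ∈ g i := by
      intro i
      by_contra hi
      push_neg at hi
      exact hi.2 (hcon (g i) (hbr i) (hf i).2 hi.1)
    rcases h3 0 with h0 | h0 <;> rcases h3 1 with h1 | h1 <;> rcases h3 2 with h2 | h2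
    · exact absurd (huniqA 0 1 h0 h1) (by decide)
    · exact absurd (huniqA 0 1 h0 h1) (by decide)
    · exact absurd (huniqA 0 2 h0 h2) (by decide)
    · exact absurd (huniqy 1 2 h1 h2) (by decide)
    · exact absurd (huniqA 1 2 h1 h2) (by decide)
    · exact absurd (huniqy 0 2 h0 h2) (by decide)
    · exact absurd (huniqy 0 1 h0 h1) (by decide)
    · exact absurd (huniqy 0 1 h0 h1) (by decide)
  -- choose a minimal infinite branch at each trifurcation
  have hchoiceD : ∀ x : V, ∃ E : Set V, x ∈ T →
      (IsBr G S t x E ∧ E.Infinite) ∧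
      ∀ E' : Set V, IsBr G S t x E' → E'.Infinite →
        (↑T ∩ E : Set V).ncard ≤ (↑T ∩ E' : Set V).ncard := by
    intro x
    by_cases hx : x ∈ T
    · obtain ⟨f, hf, hinj⟩ := haux x hx
      set N : Set ℕ := {n | ∃ E : Set V, (IsBr G S t x E ∧ E.Infinite) ∧
        (↑T ∩ E : Set V).ncard = n} with hN
      have hNne : N.Nonempty :=
        ⟨(↑T ∩ Comp G (SxS G S t x) (f 0) : Set V).ncard,
          ⟨_, ⟨isBr_comp (hf 0).1, (hf 0).2⟩, rfl⟩⟩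
      obtain ⟨E, hE, hcard⟩ := Nat.sInf_mem hNne
      refine ⟨E, fun _ => ⟨hE, fun E' hE' hE'inf => ?_⟩⟩
      rw [hcard]
      exact Nat.sInf_le ⟨E', ⟨hE', hE'inf⟩, rfl⟩
    · exact ⟨∅, fun h => absurd h hx⟩
  choose D hD using hchoiceD
  have hDbr : ∀ x ∈ T, IsBr G S t x (D x) := fun x hx => ((hD x hx).1).1
  have hDinf : ∀ x ∈ T, (D x).Infinite := fun x hx => ((hD x hx).1).2
  have hDmin : ∀ x ∈ T, ∀ E' : Set V, IsBr G S t x E' → E'.Infinite →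
      (↑T ∩ D x : Set V).ncard ≤ (↑T ∩ E' : Set V).ncard := fun x hx => (hD x hx).2
  have hDnotself : ∀ x ∈ T, x ∉ D x := fun x hx => branch_not_mem_self (hxS x hx) (hDbr x hx)
  -- cluster symmetry helper
  have hclsym : ∀ x x' : V, x ∈ S → x' ∈ Comp G S x → x ∈ Comp G S x' := by
    intro x x' hx hx'
    rw [comp_eq_of_mem hx hx']
    exact mem_comp_self hx
  -- counting step for the mutual-conflict argument
  have hstep : ∀ x ∈ T, ∀ x' ∈ T, x ≠ x' → x' ∈ Comp G S x → x' ∈ D x → x ∈ D x' →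
      (↑T ∩ D x : Set V).ncard + 1 ≤ (↑T ∩ D x' : Set V).ncard := by
    intro x hx x' hx' hne hcl hx'Dx hxDx'
    obtain ⟨B, hBbr, hBinf, hBne, hx'B⟩ := pick_branch x hx (D x) x'
    -- B ∪ core x ⊆ Comp (SxS x') x = D x'
    have hplace := branch_place (hxS x' hx') (hclsym x x' (hxS x hx) hcl)
      (fun z hz hz' => hsep x' hx' x hx hne.symm z hz hz') hBbr hx'B
    have hDx'eq : Comp G (SxS G S t x') x = D x' :=
      branch_comp_eq (hDbr x' hx') hxDx'
    rw [hDx'eq] at hplace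
    have hsub : (↑T ∩ B : Set V) ∪ {x} ⊆ (↑T ∩ D x' : Set V) := by
      rintro z (⟨hzT, hzB⟩ | hz)
      · exact ⟨hzT, hplace (Set.mem_union_left _ hzB)⟩
      · have hzx : z = x := hz
        subst hzx
        exact ⟨hx, hplace (Set.mem_union_right _ (mem_core_self (hxS z hx)))⟩
    have hxnotB : x ∉ (↑T ∩ B : Set V) := fun h => branch_not_mem_self (hxS x hx) hBbr h.2
    calc (↑T ∩ D x : Set V).ncard + 1
        ≤ (↑T ∩ B : Set V).ncard + 1 := by
          have := hDmin x hx B hBbr hBinf; omega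
      _ = ((↑T ∩ B : Set V) ∪ {x}).ncard := by
          rw [Set.union_singleton, Set.ncard_insert_of_notMem hxnotB (hTfin B)]
      _ ≤ (↑T ∩ D x' : Set V).ncard := Set.ncard_le_ncard hsub (hTfin (D x'))
  have hmutual : ∀ x ∈ T, ∀ x' ∈ T, x ≠ x' → x' ∈ Comp G S x → x' ∈ D x → x ∈ D x' → False := by
    intro x hx x' hx' hne hcl h1 h2
    have ha := hstep x hx x' hx' hne hcl h1 h2
    have hb := hstep x' hx' x hx hne.symm (hclsym x x' (hxS x hx) hcl) h2 h1
    omega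
  -- nesting
  have hnest : ∀ x ∈ T, ∀ x' ∈ T, x ≠ x' → x' ∈ Comp G S x → x' ∈ D x → x ∉ D x' →
      D x' ⊆ D x := by
    intro x hx x' hx' hne hcl hx'Dx hxDx'
    have hplace := branch_place (hxS x hx) hcl
      (fun z hz hz' => hsep x hx x' hx' hne z hz hz') (hDbr x' hx') hxDx'
    have hDxeq : Comp G (SxS G S t x) x' = D x := branch_comp_eq (hDbr x hx) hx'Dx
    rw [hDxeq] at hplace
    exact fun z hz => hplace (Set.mem_union_left _ hz)
  -- disjointness
  have hdisjbr : ∀ x ∈ T, ∀ x' ∈ T, x ≠ x' → x' ∈ Comp G S x → x' ∉ D x → x ∉ D x' →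
      ∀ z, z ∈ D x → z ∈ D x' → False := by
    intro x hx x' hx' hne hcl hx'Dx hxDx' z hz hz'
    have hplace := branch_place (hxS x hx) hcl
      (fun z hz hz' => hsep x hx x' hx' hne z hz hz') (hDbr x' hx') hxDx'
    have hz2 : z ∈ Comp G (SxS G S t x) x' := hplace (Set.mem_union_left _ hz')
    have hx'Sx : x' ∈ SxS G S t x := ⟨hcl,
      fun h => hsep x hx x' hx' hne x' (core_subset_ball h) mem_ball_self⟩
    have heq : D x = Comp G (SxS G S t x) x' :=
      hbr_eq_or_disj x _ _ (hDbr x hx) (isBr_comp hx'Sx) ⟨z, hz, hz2⟩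
    exact hx'Dx (heq ▸ mem_comp_self hx'Sx)
  -- The gap lemma: in every infinite branch `E` of a trifurcation of `T` there is a boundary
  -- vertex avoiding all chosen branches `D x'` of members of `T` inside `E`.
  have gap : ∀ n : ℕ, ∀ y ∈ T, ∀ E : Set V, IsBr G S t y E → E.Infinite →
      (↑T ∩ E : Set V).ncard ≤ n →
      ∃ b, b ∈ E ∧ b ∈ InnerBoundary G W ∧
        ∀ x' ∈ T, x' ∈ E → D x' ⊆ E → b ∉ D x' := by
    intro n
    induction n with
    | zero =>
      intro y hy E hE hEinf hcount
      obtain ⟨b, hbE, hbB⟩ := branch_meets_boundary (hxS y hy) hE hEinf (hballW y hy) hW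
      refine ⟨b, hbE, hbB, ?_⟩
      intro x' hx'T hx'E _ _
      have hne : ((↑T : Set V) ∩ E).Nonempty := ⟨x', Finset.mem_coe.2 hx'T, hx'E⟩
      have hpos := (Set.ncard_pos (hTfin E)).2 hne
      omega
    | succ k ih =>
      intro y hy E hE hEinf hcount
      by_cases hO : ∃ x1, x1 ∈ T ∧ x1 ∈ E ∧ D x1 ⊆ E
      · obtain ⟨x1, hx1T, hx1E, hDx1E⟩ := hO
        set Of : Finset V := T.filter (fun u => u ∈ E ∧ D u ⊆ E) with hOfdef
        have hmemOf : ∀ u : V, u ∈ Of ↔ u ∈ T ∧ u ∈ E ∧ D u ⊆ E := by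
          intro u; simp [hOfdef]
        have hOfne : Of.Nonempty := ⟨x1, (hmemOf x1).2 ⟨hx1T, hx1E, hDx1E⟩⟩
        obtain ⟨x0, hx0Of, hx0max⟩ :=
          Finset.exists_max_image Of (fun u => ((↑T : Set V) ∩ D u).ncard) hOfne
        obtain ⟨hx0T, hx0E, hDx0E⟩ := (hmemOf x0).1 hx0Of
        have hEsubC : E ⊆ Comp G S y := fun z hz => (branch_subset hE hz).1
        have hcl2 : ∀ u v : V, u ∈ E → v ∈ E → v ∈ Comp G S u := by
          intro u v hu hv
          rw [comp_eq_of_mem (hxS y hy) (hEsubC hu)]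
          exact hEsubC hv
        have hynE : y ∉ E := branch_not_mem_self (hxS y hy) hE
        have hyne : y ≠ x0 := fun h => hynE (h ▸ hx0E)
        -- x0 is in no chosen branch of a member of Of
        have hx0notD : ∀ u ∈ Of, x0 ∉ D u := by
          intro u huOf hmem
          obtain ⟨huT, huE, hDuE⟩ := (hmemOf u).1 huOf
          by_cases hux0 : u = x0
          · exact hDnotself x0 hx0T (hux0 ▸ hmem)
          · by_cases hx0u : u ∈ D x0
            · exact hmutual u huT x0 hx0T hux0 (hcl2 u x0 huE hx0E) hmem hx0u
            · have hsub : D x0 ⊆ D u :=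
                hnest u huT x0 hx0T hux0 (hcl2 u x0 huE hx0E) hmem hx0u
              have hssub : ((↑T : Set V) ∩ D x0) ⊂ ((↑T : Set V) ∩ D u) := by
                refine ⟨Set.inter_subset_inter_right _ hsub, fun hback => ?_⟩
                exact hDnotself x0 hx0T (hback ⟨Finset.mem_coe.2 hx0T, hmem⟩).2
              have hlt := Set.ncard_lt_ncard hssub (hTfin (D u))
              have := hx0max u huOf
              omega
        -- pick a branch of x0 different from D x0 and avoiding y
        obtain ⟨E', hE'br, hE'inf, hE'ne, hyE'⟩ := pick_branch x0 hx0T (D x0) y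
        have hplace := branch_place (hxS y hy) (hEsubC hx0E)
          (fun z hz hz' => hsep y hy x0 hx0T hyne z hz hz') hE'br hyE'
        rw [branch_comp_eq hE hx0E] at hplace
        have hE'subE : E' ⊆ E := fun z hz => hplace (Set.mem_union_left _ hz)
        have hx0E' : x0 ∉ E' := branch_not_mem_self (hxS x0 hx0T) hE'br
        have hltE : ((↑T : Set V) ∩ E').ncard ≤ k := by
          have hssub : ((↑T : Set V) ∩ E') ⊂ ((↑T : Set V) ∩ E) := by
            refine ⟨Set.inter_subset_inter_right _ hE'subE, fun hback => ?_⟩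
            exact hx0E' (hback ⟨Finset.mem_coe.2 hx0T, hx0E⟩).2
          have hlt := Set.ncard_lt_ncard hssub (hTfin E)
          omega
        obtain ⟨b, hbE', hbB, hbavoid⟩ := ih x0 hx0T E' hE'br hE'inf hltE
        refine ⟨b, hE'subE hbE', hbB, ?_⟩
        intro x' hx'T hx'E hDx'E hbD
        have hx'Of : x' ∈ Of := (hmemOf x').2 ⟨hx'T, hx'E, hDx'E⟩
        have hx0nD : x0 ∉ D x' := hx0notD x' hx'Of
        by_cases hx'x0 : x' = x0
        · subst hx'x0
          exact hE'ne (hbr_eq_or_disj x' E' (D x') hE'br (hDbr x' hx'T) ⟨b, hbE', hbD⟩)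
        · have hplace2 := branch_place (hxS x0 hx0T) (hcl2 x0 x' hx0E hx'E)
            (fun z hz hz' => hsep x0 hx0T x' hx'T (Ne.symm hx'x0) z hz hz')
            (hDbr x' hx'T) hx0nD
          have hbphi : b ∈ Comp G (SxS G S t x0) x' := hplace2 (Set.mem_union_left _ hbD)
          have hx'Sx0 : x' ∈ SxS G S t x0 := ⟨hcl2 x0 x' hx0E hx'E,
            fun h => hsep x0 hx0T x' hx'T (Ne.symm hx'x0) x' (core_subset_ball h) mem_ball_self⟩
          have heq : Comp G (SxS G S t x0) x' = E' :=
            hbr_eq_or_disj x0 _ E' (isBr_comp hx'Sx0) hE'br ⟨b, hbphi, hbE'⟩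
          have hx'E' : x' ∈ E' := heq ▸ mem_comp_self hx'Sx0
          have hDx'E' : D x' ⊆ E' := fun z hz =>
            heq ▸ (hplace2 (Set.mem_union_left _ hz))
          exact hbavoid x' hx'T hx'E' hDx'E' hbD
      · obtain ⟨b, hbE, hbB⟩ := branch_meets_boundary (hxS y hy) hE hEinf (hballW y hy) hW
        refine ⟨b, hbE, hbB, ?_⟩
        intro x' hx'T hx'E hsub _
        exact hO ⟨x', hx'T, hx'E, hsub⟩
  -- choose the boundary point in each D x
  have hbetaex : ∀ x : V, ∃ b : V, x ∈ T → b ∈ D x ∧ b ∈ InnerBoundary G W ∧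
      ∀ x' ∈ T, x' ∈ D x → D x' ⊆ D x → b ∉ D x' := by
    intro x
    by_cases hx : x ∈ T
    · obtain ⟨b, h1, h2, h3⟩ := gap ((↑T ∩ D x : Set V).ncard) x hx (D x)
        (hDbr x hx) (hDinf x hx) le_rfl
      exact ⟨b, fun _ => ⟨h1, h2, h3⟩⟩
    · exact ⟨x, fun h => absurd h hx⟩
  choose beta hbeta using hbetaex
  have hDsubC : ∀ x ∈ T, D x ⊆ Comp G S x := fun x hx z hz => (branch_subset (hDbr x hx) hz).1
  refine ⟨beta, ?_, fun x hx => (hbeta x hx).2.1⟩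
  intro x hxT x' hx'T heq
  by_contra hne
  have hxT' : x ∈ T := hxT
  have hx'T' : x' ∈ T := hx'T
  have hbx : beta x ∈ D x := (hbeta x hxT').1
  have hbx' : beta x' ∈ D x' := (hbeta x' hx'T').1
  rw [heq] at hbx
  by_cases hcl : x' ∈ Comp G S x
  · by_cases h1 : x' ∈ D x <;> by_cases h2 : x ∈ D x'
    · exact hmutual x hxT' x' hx'T' hne hcl h1 h2
    · have hsub : D x' ⊆ D x := hnest x hxT' x' hx'T' hne hcl h1 h2
      exact (hbeta x hxT').2.2 x' hx'T' h1 hsub (heq ▸ hbx')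
    · have hsub : D x ⊆ D x' :=
        hnest x' hx'T' x hxT' (Ne.symm hne) (hclsym x x' (hxS x hxT') hcl) h2 h1
      exact (hbeta x' hx'T').2.2 x hxT' h2 hsub hbx
    · exact hdisjbr x hxT' x' hx'T' hne hcl h1 h2 (beta x') hbx hbx'
  · have hmem : beta x' ∈ Comp G S x ∩ Comp G S x' :=
      ⟨hDsubC x hxT' hbx, hDsubC x' hx'T' hbx'⟩
    have hceq := comp_eq_of_inter (hxS x hxT') (hxS x' hx'T') ⟨beta x', hmem⟩
    exact hcl (hceq ▸ mem_comp_self (hxS x' hx'T'))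


lemma sep_of_balls {G : SimpleGraph V} {t : ℕ} {x x' z : V}
    (h : ¬ G.edist x x' ≤ ((2 * t : ℕ) : ℕ∞))
    (hz : z ∈ GraphBall G x t) (hz' : z ∈ GraphBall G x' t) : False := by
  apply h
  have h1 : G.edist x x' ≤ G.edist x z + G.edist z x' := SimpleGraph.edist_triangle
  have h2 : G.edist z x' ≤ (t : ℕ∞) := by
    rw [SimpleGraph.edist_comm]; exact hz'
  calc G.edist x x' ≤ (t : ℕ∞) + (t : ℕ∞) := le_trans h1 (add_le_add hz h2)
    _ = ((2 * t : ℕ) : ℕ∞) := by push_cast; ring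

end BK


theorem stmt3 {V : Type*} (G : SimpleGraph V)
    (hlf : ∀ v : V, (G.neighborSet v).Finite)
    (t m m' : ℕ)
    (hm : ∀ x : V, (GraphBall G x (2 * t + 1)).ncard ≤ m)
    (hm' : ∀ x : V, (GraphBall G x (t + 1)).ncard ≤ m')
    (S : Set V) (W : Set V) (hW : W.Finite) :
    {x ∈ W | IsTrifurcation G S t x}.ncard ≤ m * m' * (InnerBoundary G W).ncard := by
  classical
  open BK in
  have hTset : {x ∈ W | IsTrifurcation G S t x}.Finite :=
    hW.subset (Set.sep_subset _ _)
  set Tf : Finset V := hTset.toFinset with hTfdef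
  have hmemTf : ∀ x : V, x ∈ Tf ↔ x ∈ W ∧ IsTrifurcation G S t x := by
    intro x; rw [hTfdef, Set.Finite.mem_toFinset]; exact Iff.rfl
  have hncard : {x ∈ W | IsTrifurcation G S t x}.ncard = Tf.card := by
    rw [hTfdef, Set.ncard_eq_toFinset_card _ hTset]
  -- greedy maximal separated subset of Tf
  have hsepst : ∃ A : Finset V, (A ⊆ Tf ∧ ∀ x ∈ A, ∀ x' ∈ A, x ≠ x' →
      ¬ G.edist x x' ≤ ((2 * t : ℕ) : ℕ∞)) ∧
      ∀ y ∈ Tf, ∃ x ∈ A, G.edist x y ≤ ((2 * t : ℕ) : ℕ∞) := by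
    set P : Finset V → Prop := fun A => A ⊆ Tf ∧ ∀ x ∈ A, ∀ x' ∈ A, x ≠ x' →
      ¬ G.edist x x' ≤ ((2 * t : ℕ) : ℕ∞) with hP
    have hPfin : (Tf.powerset.filter P).Nonempty :=
      ⟨∅, by simp [hP]⟩
    obtain ⟨A, hA, hAmax⟩ :=
      Finset.exists_max_image (Tf.powerset.filter P) Finset.card hPfin
    rw [Finset.mem_filter, Finset.mem_powerset] at hA
    refine ⟨A, ⟨hA.1, hA.2.2⟩, ?_⟩
    intro y hy
    by_contra hcon
    push_neg at hcon
    have hynA : y ∉ A := by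
      intro h
      have := hcon y h
      simp [SimpleGraph.edist_self] at this
    have hins : P (insert y A) := by
      refine ⟨Finset.insert_subset hy hA.1, ?_⟩
      intro a ha b hb hab
      rcases Finset.mem_insert.1 ha with rfl | ha' <;>
        rcases Finset.mem_insert.1 hb with rfl | hb'
      · exact absurd rfl hab
      · intro hle
        rw [SimpleGraph.edist_comm] at hle
        exact absurd hle (not_le.2 (hcon b hb'))
      · exact fun hle => absurd hle (not_le.2 (hcon a ha'))
      · exact hA.2.2 a ha' b hb' hab
    have hmem : insert y A ∈ Tf.powerset.filter P := by
      rw [Finset.mem_filter, Finset.mem_powerset]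
      exact ⟨hins.1, hins⟩
    have := hAmax _ hmem
    rw [Finset.card_insert_of_notMem hynA] at this
    omega
  obtain ⟨A, ⟨hATf, hAsep⟩, hAcov⟩ := hsepst
  -- First counting: |Tf| ≤ m * |A|
  have hcov' : ∀ y : V, ∃ x : V, y ∈ Tf → x ∈ A ∧ G.edist x y ≤ ((2 * t : ℕ) : ℕ∞) := by
    intro y
    by_cases hy : y ∈ Tf
    · obtain ⟨x, hx1, hx2⟩ := hAcov y hy
      exact ⟨x, fun _ => ⟨hx1, hx2⟩⟩
    · exact ⟨y, fun h => absurd h hy⟩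
  choose f hf using hcov'
  have hcount1 : Tf.card ≤ m * A.card := by
    have h1 : Tf.card ≤ m * (Tf.image f).card := by
      apply Finset.card_le_mul_card_image
      intro a ha
      have hballfin : (GraphBall G a (2 * t + 1)).Finite := BK.ball_finite hlf a _
      have hsubset : Tf.filter (fun y => f y = a) ⊆ hballfin.toFinset := by
        intro u hu
        rw [Finset.mem_filter] at hu
        rw [Set.Finite.mem_toFinset]
        have h2 := (hf u hu.1).2
        rw [hu.2] at h2
        exact BK.ball_mono (by omega) (show u ∈ GraphBall G a (2*t) from h2)
      refine le_trans (Finset.card_le_card hsubset) ?_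
      rw [← Set.ncard_eq_toFinset_card _ hballfin]
      exact hm a
    have h2 : (Tf.image f).card ≤ A.card := by
      apply Finset.card_le_card
      intro b hb
      obtain ⟨u, hu, rfl⟩ := Finset.mem_image.1 hb
      exact (hf u hu).1
    calc Tf.card ≤ m * (Tf.image f).card := h1
      _ ≤ m * A.card := Nat.mul_le_mul_left m h2
  -- members of A are trifurcations in W
  have hAW : ∀ x ∈ A, x ∈ W := fun x hx => ((hmemTf x).1 (hATf hx)).1
  have hAtri : ∀ x ∈ A, IsTrifurcation G S t x := fun x hx => ((hmemTf x).1 (hATf hx)).2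
  -- split A according to whether the (t+1)-ball is inside W
  set A1 : Finset V := A.filter (fun x => GraphBall G x (t+1) ⊆ W) with hA1def
  have hsepballs : ∀ x ∈ A1, ∀ x' ∈ A1, x ≠ x' →
      ∀ z, z ∈ GraphBall G x t → z ∈ GraphBall G x' t → False := by
    intro x hx x' hx' hne z hz hz'
    exact BK.sep_of_balls
      (hAsep x (Finset.mem_of_mem_filter x hx) x' (Finset.mem_of_mem_filter x' hx') hne) hz hz'
  obtain ⟨beta, hbetainj, hbetaB⟩ := BK.bk_injection hW A1
    (fun x hx => hAtri x (Finset.mem_of_mem_filter x hx))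
    (fun x hx => (Finset.mem_filter.1 hx).2)
    hsepballs
  -- boundary points near members of A \ A1
  have hnear : ∀ x : V, ∃ b : V, x ∈ A ∧ x ∉ A1 →
      b ∈ InnerBoundary G W ∧ b ∈ GraphBall G x (t+1) := by
    intro x
    by_cases hx : x ∈ A ∧ x ∉ A1
    · have hnotsub : ¬ GraphBall G x (t+1) ⊆ W := by
        intro h
        exact hx.2 (Finset.mem_filter.2 ⟨hx.1, h⟩)
      obtain ⟨z, hz, hzW⟩ := Set.not_subset.1 hnotsub
      obtain ⟨b, hb1, hb2⟩ := BK.exists_boundary_near (show G.edist x z ≤ ((t+1 : ℕ) : ℕ∞) from hz)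
        (hAW x hx.1) hzW
      exact ⟨b, fun _ => ⟨hb1, hb2⟩⟩
    · exact ⟨x, fun h => absurd h hx⟩
  choose bout hbout using hnear
  -- outside neighbours of boundary points
  have hnbex : ∀ b : V, ∃ z : V, b ∈ InnerBoundary G W → z ∉ W ∧ G.Adj b z := by
    intro b
    by_cases hb : b ∈ InnerBoundary G W
    · obtain ⟨_, z, hz1, hz2⟩ := hb
      exact ⟨z, fun _ => ⟨hz1, hz2⟩⟩
    · exact ⟨b, fun h => absurd h hb⟩
  choose nb hnb using hnbex
  set g : V → V := fun x => if x ∈ A1 then beta x else bout x with hgdef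
  have hgB : ∀ x ∈ A, g x ∈ InnerBoundary G W := by
    intro x hx
    rw [hgdef]
    by_cases h1 : x ∈ A1
    · simpa [h1] using hbetaB x h1
    · simpa [h1] using (hbout x ⟨hx, h1⟩).1
  have hBfin : (InnerBoundary G W).Finite := hW.subset (fun b hb => hb.1)
  -- Second counting: |A| ≤ m' * |∂W|
  have hcount2 : A.card ≤ m' * (InnerBoundary G W).ncard := by
    have h1 : A.card ≤ m' * (A.image g).card := by
      apply Finset.card_le_mul_card_image
      intro b hb
      obtain ⟨u0, hu0, hgu0⟩ := Finset.mem_image.1 hb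
      have hbB : b ∈ InnerBoundary G W := hgu0 ▸ hgB u0 hu0
      have hballfin : (GraphBall G b (t+1)).Finite := BK.ball_finite hlf b _
      set phi : V → V := fun x => if x ∈ A1 then nb b else x with hphidef
      have hmaps : ∀ x ∈ A.filter (fun x => g x = b), phi x ∈ hballfin.toFinset := by
        intro x hx
        rw [Finset.mem_filter] at hx
        rw [Set.Finite.mem_toFinset]
        rw [hphidef]
        by_cases h1 : x ∈ A1
        · simp only [h1, if_true]
          have hadj := (hnb b hbB).2
          have : G.edist b (nb b) ≤ 1 := le_of_eq (SimpleGraph.edist_eq_one_iff_adj.2 hadj)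
          exact le_trans this (by exact_mod_cast Nat.one_le_iff_ne_zero.2 (by omega))
        · simp only [h1, if_false]
          have hx2 : g x = b := hx.2
          rw [hgdef] at hx2
          simp only [h1, if_false] at hx2
          have := (hbout x ⟨hx.1, h1⟩).2
          rw [hx2] at this
          exact BK.mem_ball_comm.1 this
      have hinj : Set.InjOn phi (A.filter (fun x => g x = b)) := by
        intro u hu v hv huv
        rw [Finset.coe_filter, Set.mem_setOf_eq] at hu hv
        rw [hphidef] at huv
        by_cases h1 : u ∈ A1 <;> by_cases h2 : v ∈ A1
        · simp only [h1, h2, if_true] at huv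
          apply hbetainj h1 h2
          have hgu : g u = b := hu.2
          have hgv : g v = b := hv.2
          rw [hgdef] at hgu hgv
          simp only [h1, if_true] at hgu
          simp only [h2, if_true] at hgv
          rw [hgu, hgv]
        · exfalso
          simp only [h1, h2, if_true, if_false] at huv
          exact (hnb b hbB).1 (huv ▸ hAW v hv.1)
        · exfalso
          simp only [h1, h2, if_true, if_false] at huv
          exact (hnb b hbB).1 (huv ▸ hAW u hu.1)
        · simpa [h1, h2] using huv
      have := Finset.card_le_card_of_injOn phi hmaps hinj
      refine le_trans this ?_
      rw [← Set.ncard_eq_toFinset_card _ hballfin]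
      exact hm' b
    have h2 : (A.image g).card ≤ (InnerBoundary G W).ncard := by
      rw [Set.ncard_eq_toFinset_card _ hBfin]
      apply Finset.card_le_card
      intro b hb
      obtain ⟨u, hu, rfl⟩ := Finset.mem_image.1 hb
      rw [Set.Finite.mem_toFinset]
      exact hgB u hu
    calc A.card ≤ m' * (A.image g).card := h1
      _ ≤ m' * (InnerBoundary G W).ncard := Nat.mul_le_mul_left m' h2
  rw [hncard]
  calc Tf.card ≤ m * A.card := hcount1
    _ ≤ m * (m' * (InnerBoundary G W).ncard) := Nat.mul_le_mul_left m hcount2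
    _ = m * m' * (InnerBoundary G W).ncard := by ring
end

section
/- Let G = (V,E) be a locally finite simple graph, r ≥ 1 an integer, and W ⊆ V finite. Set W' = ⋃_{w∈W} B(w,r). Then ∂W' ⊆ ⋃_{b∈∂W} B(b,r); in particular, if m ∈ ℕ satisfies |B(x,r)| ≤ m for every x ∈ V, then |∂W'| ≤ m · |∂W|. -/
private lemma walk_boundary {V : Type*} {G : SimpleGraph V} {W : Set V} :
    ∀ {w x : V} (p : G.Walk w x), w ∈ W → x ∉ W →
      ∃ b, b ∈ InnerBoundary G W ∧ G.edist b x ≤ p.length := by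
  intro w x p
  induction p with
  | nil => intro hw hx; exact absurd hw hx
  | @cons u v z h q ih =>
    intro hw hx
    by_cases hv : v ∈ W
    · obtain ⟨b, hb, hle⟩ := ih hv hx
      refine ⟨b, hb, hle.trans ?_⟩
      simp only [SimpleGraph.Walk.length_cons]
      exact_mod_cast Nat.le_succ _
    · exact ⟨u, ⟨hw, v, hv, h⟩, SimpleGraph.edist_le _⟩

private lemma ball_finite {V : Type*} {G : SimpleGraph V}
    (hlf : ∀ v : V, (G.neighborSet v).Finite) (x : V) (t : ℕ) :
    (GraphBall G x t).Finite := by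
  induction t generalizing x with
  | zero =>
    refine Set.Finite.subset (Set.finite_singleton x) fun y hy => ?_
    simp only [GraphBall, Set.mem_setOf_eq, Nat.cast_zero, nonpos_iff_eq_zero] at hy
    simp [(SimpleGraph.edist_eq_zero_iff.mp hy).symm]
  | succ t ih =>
    have hsub : GraphBall G x (t+1) ⊆ insert x (⋃ z ∈ G.neighborSet x, GraphBall G z t) := by
      intro y hy
      simp only [GraphBall, Set.mem_setOf_eq] at hy
      have hne : G.edist x y ≠ ⊤ :=
        fun h => ENat.coe_ne_top _ (top_le_iff.mp (h ▸ hy))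
      obtain ⟨p, hp⟩ := SimpleGraph.exists_walk_of_edist_ne_top hne
      have hplen : (p.length : ℕ∞) ≤ (t + 1 : ℕ) := by
        rw [hp]; exact_mod_cast hy
      have hplen' : p.length ≤ t + 1 := by exact_mod_cast hplen
      cases p with
      | nil => exact Set.mem_insert _ _
      | @cons _ z _ h q =>
        refine Set.mem_insert_iff.mpr (Or.inr (Set.mem_biUnion h ?_))
        have hq : q.length ≤ t := by
          simpa [SimpleGraph.Walk.length_cons] using hplen'
        calc G.edist z y ≤ q.length := SimpleGraph.edist_le _
          _ ≤ (t : ℕ∞) := by exact_mod_cast hq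
    exact Set.Finite.subset
      ((Set.Finite.biUnion (hlf x) (fun z _ => ih z)).insert x) hsub

theorem stmt4 {V : Type*} (G : SimpleGraph V)
    (hlf : ∀ v : V, (G.neighborSet v).Finite)
    (r : ℕ) (hr : 1 ≤ r) (W : Set V) (hW : W.Finite) :
    (InnerBoundary G (⋃ w ∈ W, GraphBall G w r) ⊆ ⋃ b ∈ InnerBoundary G W, GraphBall G b r) ∧
    (∀ m : ℕ, (∀ x : V, (GraphBall G x r).ncard ≤ m) →
      (InnerBoundary G (⋃ w ∈ W, GraphBall G w r)).ncard ≤ m * (InnerBoundary G W).ncard) := by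
  have hWsub : W ⊆ ⋃ w ∈ W, GraphBall G w r := by
    intro w hw
    exact Set.mem_biUnion hw (by simp [GraphBall])
  have hmain : InnerBoundary G (⋃ w ∈ W, GraphBall G w r) ⊆
      ⋃ b ∈ InnerBoundary G W, GraphBall G b r := by
    rintro x ⟨hx, y, hy, hadj⟩
    obtain ⟨w, hw, hxw⟩ := Set.mem_iUnion₂.mp hx
    have hyW : y ∉ W := fun h => hy (hWsub h)
    by_cases hxW : x ∈ W
    · exact Set.mem_biUnion ⟨hxW, y, hyW, hadj⟩ (by simp [GraphBall])
    · -- get a walk from w to x of length = edist ≤ r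
      have hne : G.edist w x ≠ ⊤ := fun h => by
        simp only [GraphBall, Set.mem_setOf_eq, h] at hxw
        simp at hxw
      obtain ⟨p, hp⟩ := SimpleGraph.exists_walk_of_edist_ne_top hne
      obtain ⟨b, hb, hble⟩ := walk_boundary p hw hxW
      refine Set.mem_biUnion hb ?_
      show G.edist b x ≤ (r : ℕ∞)
      calc G.edist b x ≤ p.length := hble
        _ = G.edist w x := hp
        _ ≤ r := hxw
  refine ⟨hmain, fun m hm => ?_⟩
  have hbW : (InnerBoundary G W).Finite :=
    hW.subset (fun x hx => hx.1)
  have hfin : (⋃ b ∈ InnerBoundary G W, GraphBall G b r).Finite :=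
    Set.Finite.biUnion hbW (fun b _ => ball_finite hlf b r)
  calc (InnerBoundary G (⋃ w ∈ W, GraphBall G w r)).ncard
      ≤ (⋃ b ∈ InnerBoundary G W, GraphBall G b r).ncard :=
        Set.ncard_le_ncard hmain hfin
    _ ≤ ∑ b ∈ hbW.toFinset, (GraphBall G b r).ncard := by
        classical
        have heq : (⋃ b ∈ InnerBoundary G W, GraphBall G b r) =
            ↑(hbW.toFinset.biUnion fun b => (ball_finite hlf b r).toFinset) := by
          ext z
          simp [Set.mem_iUnion]
        rw [heq, Set.ncard_coe_finset]
        refine (Finset.card_biUnion_le).trans (Finset.sum_le_sum fun b _ => ?_)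
        rw [Set.ncard_eq_toFinset_card _ (ball_finite hlf b r)]
    _ ≤ ∑ _b ∈ hbW.toFinset, m := Finset.sum_le_sum (fun b _ => hm b)
    _ = m * (InnerBoundary G W).ncard := by
        rw [Finset.sum_const, smul_eq_mul, mul_comm,
          Set.ncard_eq_toFinset_card _ hbW]
end

section
/- Let G = (V,E) be a connected, locally finite, vertex-transitive simple graph, let x₀ ∈ V, t ∈ ℕ, and write m = |B(x₀, 2t+1)| and m' = |B(x₀, t+1)|. Let (Ω, 𝒜, P) be a probability space and S : Ω → 𝒫(V) a map such that for each x ∈ V the set T_x = {ω ∈ Ω : x is a t-trifurcation of S(ω)} is measurable, and suppose there exists c > 0 with P(T_x) ≥ c for every x ∈ V. Then every finite nonempty W ⊆ V satisfies |∂W| / |W| ≥ c / (m · m'); in particular the vertex isoperimetric constant κ_V(G) = inf{ |∂A|/|A| : A ⊆ V finite nonempty } is strictly positive, i.e. G is not amenable. -/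
open MeasureTheory


namespace Trif
open SimpleGraph
variable {V : Type*} (G : SimpleGraph V)

/-- Connectivity within a vertex set, via walks of `G` with support in `S`. -/
def Conn (S : Set V) (x y : V) : Prop := ∃ p : G.Walk x y, ∀ z ∈ p.support, z ∈ S

variable {G}

lemma Conn.left_mem {S : Set V} {x y : V} (h : Conn G S x y) : x ∈ S := by
  obtain ⟨p, hp⟩ := h; exact hp _ p.start_mem_support

lemma Conn.right_mem {S : Set V} {x y : V} (h : Conn G S x y) : y ∈ S := by
  obtain ⟨p, hp⟩ := h; exact hp _ p.end_mem_support

lemma Conn.refl {S : Set V} {x : V} (hx : x ∈ S) : Conn G S x x :=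
  ⟨SimpleGraph.Walk.nil, by simp [hx]⟩

lemma Conn.symm {S : Set V} {x y : V} (h : Conn G S x y) : Conn G S y x := by
  obtain ⟨p, hp⟩ := h
  refine ⟨p.reverse, ?_⟩
  intro z hz
  rw [SimpleGraph.Walk.support_reverse] at hz
  exact hp z (List.mem_reverse.mp hz)

lemma Conn.trans {S : Set V} {x y z : V} (h : Conn G S x y) (h' : Conn G S y z) :
    Conn G S x z := by
  obtain ⟨p, hp⟩ := h; obtain ⟨q, hq⟩ := h'
  refine ⟨p.append q, ?_⟩
  intro w hw
  rcases (SimpleGraph.Walk.mem_support_append_iff p q).mp hw with h1 | h1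
  · exact hp _ h1
  · exact hq _ h1

lemma Conn.mono {S S' : Set V} (hss : S ⊆ S') {x y : V} (h : Conn G S x y) :
    Conn G S' x y := by
  obtain ⟨p, hp⟩ := h; exact ⟨p, fun z hz => hss (hp z hz)⟩

lemma mem_comp_iff {S : Set V} {x y : V} : y ∈ Comp G S x ↔ Conn G S x y := by
  constructor
  · rintro ⟨hx, hy, hr⟩
    obtain ⟨q⟩ := hr
    refine ⟨q.map ⟨Subtype.val, fun h => h⟩, ?_⟩
    intro z hz
    rw [SimpleGraph.Walk.support_map] at hz
    obtain ⟨⟨z', hz'⟩, _, rfl⟩ := List.mem_map.mp hz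
    exact hz'
  · rintro ⟨p, hp⟩
    have hx : x ∈ S := hp _ p.start_mem_support
    have hy : y ∈ S := hp _ p.end_mem_support
    have key : ∀ {a b : V} (p : G.Walk a b) (hp : ∀ z ∈ p.support, z ∈ S)
        (ha : a ∈ S) (hb : b ∈ S), (G.induce S).Reachable ⟨a, ha⟩ ⟨b, hb⟩ := by
      intro a b p
      induction p with
      | nil => intro _ _ _; rfl
      | @cons a b d hab q ih =>
          intro hp ha hd
          have hb : b ∈ S := hp _ (by simp)
          have h1 : (G.induce S).Adj ⟨a, ha⟩ ⟨b, hb⟩ := hab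
          exact h1.reachable.trans (ih (fun z hz => hp z (by simp [hz])) hb hd)
    exact ⟨hx, hy, key p hp hx hy⟩

lemma comp_subset {S : Set V} {x : V} : Comp G S x ⊆ S := by
  intro y hy; exact (mem_comp_iff.mp hy).right_mem

lemma mem_comp_self {S : Set V} {x : V} (hx : x ∈ S) : x ∈ Comp G S x :=
  mem_comp_iff.mpr (Conn.refl hx)

lemma comp_eq_of_mem {S : Set V} {x y : V} (h : y ∈ Comp G S x) :
    Comp G S y = Comp G S x := by
  have hxy : Conn G S x y := mem_comp_iff.mp h
  ext z
  simp only [mem_comp_iff]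
  exact ⟨fun h' => hxy.trans h', fun h' => hxy.symm.trans h'⟩

lemma mem_comp_trans {S : Set V} {x y z : V} (h : y ∈ Comp G S x)
    (h' : z ∈ Comp G S y) : z ∈ Comp G S x := by
  rw [← comp_eq_of_mem h]; exact h'

/-- Every vertex of a component is connected to the root *within the component*. -/
lemma conn_comp_of_mem {S : Set V} {x y : V} (h : y ∈ Comp G S x) :
    Conn G (Comp G S x) x y := by
  classical
  obtain ⟨p, hp⟩ := mem_comp_iff.mp h
  refine ⟨p, ?_⟩
  intro z hz
  exact mem_comp_iff.mpr ⟨p.takeUntil z hz, fun w hw =>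
    hp w (SimpleGraph.Walk.support_takeUntil_subset p hz hw)⟩

lemma conn_comp_pair {S : Set V} {x a b : V} (ha : a ∈ Comp G S x) (hb : b ∈ Comp G S x) :
    Conn G (Comp G S x) a b :=
  (conn_comp_of_mem ha).symm.trans (conn_comp_of_mem hb)


open SimpleGraph

section Balls
variable {V : Type*} {G : SimpleGraph V}

lemma iso_edist_le (φ : G ≃g G) (a b : V) : G.edist (φ a) (φ b) ≤ G.edist a b := by
  by_cases h : G.edist a b = ⊤
  · simp [h]
  · obtain ⟨p, hp⟩ := exists_walk_of_edist_ne_top h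
    calc G.edist (φ a) (φ b) ≤ (p.map φ.toHom).length := SimpleGraph.Walk.edist_le _
    _ = p.length := by rw [SimpleGraph.Walk.length_map]
    _ = G.edist a b := hp

lemma iso_edist (φ : G ≃g G) (a b : V) : G.edist (φ a) (φ b) = G.edist a b := by
  refine le_antisymm (iso_edist_le φ a b) ?_
  have := iso_edist_le φ.symm (φ a) (φ b)
  simpa using this

lemma ball_image (φ : G ≃g G) (x : V) (r : ℕ) :
    φ '' GraphBall G x r = GraphBall G (φ x) r := by
  ext y
  constructor
  · rintro ⟨z, hz, rfl⟩
    simpa [GraphBall, iso_edist φ] using hz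
  · intro hy
    refine ⟨φ.symm y, ?_, by simp⟩
    have : G.edist (φ x) y ≤ r := hy
    rw [show y = φ (φ.symm y) by simp, iso_edist φ] at this
    exact this

lemma mem_ball_self (x : V) (r : ℕ) : x ∈ GraphBall G x r := by
  simp [GraphBall, SimpleGraph.edist_self]

lemma ball_mono (x : V) {r r' : ℕ} (h : r ≤ r') : GraphBall G x r ⊆ GraphBall G x r' := by
  intro y hy
  have hy' : G.edist x y ≤ (r : ℕ∞) := hy
  exact le_trans hy' (by exact_mod_cast h)

lemma ball_finite (hlf : ∀ v : V, (G.neighborSet v).Finite) :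
    ∀ (r : ℕ) (x : V), (GraphBall G x r).Finite := by
  intro r
  induction r with
  | zero =>
      intro x
      have : GraphBall G x 0 ⊆ {x} := by
        intro y hy
        have h0 : G.edist x y ≤ ((0:ℕ):ℕ∞) := hy
        have : G.edist x y = 0 := le_antisymm (by simpa using h0) zero_le
        simp [edist_eq_zero_iff.mp this]
      exact (Set.finite_singleton x).subset this
  | succ r ih =>
      intro x
      have hsub : GraphBall G x (r+1) ⊆ GraphBall G x r ∪
          ⋃ y ∈ GraphBall G x r, G.neighborSet y := by
        intro z hz
        have hz' : G.edist x z ≤ ((r+1 : ℕ) : ℕ∞) := hz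
        have hne : G.edist z x ≠ ⊤ := by
          rw [SimpleGraph.edist_comm]
          intro h; rw [h] at hz'
          exact ENat.coe_ne_top _ (top_le_iff.mp hz')
        obtain ⟨p, hp⟩ := exists_walk_of_edist_ne_top hne
        have hplen : (p.length : ℕ∞) ≤ ((r+1 : ℕ) : ℕ∞) := by
          rw [hp, SimpleGraph.edist_comm]; exact hz'
        cases p with
        | nil => exact Or.inl (mem_ball_self x r)
        | @cons a b c hadj q =>
            right
            have hq : G.edist x b ≤ (r : ℕ∞) := by
              refine le_trans (SimpleGraph.edist_comm (u := x) ▸ q.edist_le) ?_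
              have : q.length + 1 ≤ r + 1 := by exact_mod_cast hplen
              exact_mod_cast Nat.le_of_succ_le_succ this
            refine Set.mem_biUnion hq ?_
            exact hadj.symm
      exact ((ih x).union ((ih x).biUnion (fun y _ => hlf y))).subset hsub
end Balls

section Laminar
variable {α : Type*} [DecidableEq α]

/-- Laminar family bound: a nonempty family of nonempty pairwise nested-or-disjoint
subsets of `X` has at most `2|X| - 1` members. -/
lemma laminar_card_bound :
    ∀ (n : ℕ) (X : Finset α) (F : Finset (Finset α)), X.card ≤ n →
    (∀ A ∈ F, A ⊆ X) → (∀ A ∈ F, A.Nonempty) →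
    (∀ A ∈ F, ∀ B ∈ F, A ⊆ B ∨ B ⊆ A ∨ Disjoint A B) →
    F.Nonempty → F.card + 1 ≤ 2 * X.card := by
  intro n
  induction n with
  | zero =>
      intro X F hX hsub hne _ hFne
      obtain ⟨A, hA⟩ := hFne
      obtain ⟨a, ha⟩ := hne A hA
      exact absurd (hX) (by
        have : a ∈ X := hsub A hA ha
        have : 0 < X.card := Finset.card_pos.mpr ⟨a, this⟩
        omega)
  | succ n ih =>
      intro X F hX hsub hne hlam hFne
      classical
      set F' := F.erase X with hF'
      have hcard : F.card ≤ F'.card + 1 := by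
        have : F ⊆ insert X F' := by
          intro A hA
          by_cases h : A = X
          · simp [h]
          · exact Finset.mem_insert_of_mem (Finset.mem_erase.mpr ⟨h, hA⟩)
        calc F.card ≤ (insert X F').card := Finset.card_le_card this
        _ ≤ F'.card + 1 := Finset.card_insert_le _ _
      have hXpos : 1 ≤ X.card := by
        obtain ⟨A, hA⟩ := hFne
        obtain ⟨a, ha⟩ := hne A hA
        exact Finset.card_pos.mpr ⟨a, hsub A hA ha⟩
      by_cases hF'e : F' = ∅
      · -- F = {X}
        have : F.card ≤ 1 := by rw [hF'e] at hcard; simpa using hcard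
        omega
      · have hF'ne : F'.Nonempty := Finset.nonempty_iff_ne_empty.mpr hF'e
        -- maximal members
        have hmaxex : ∀ A ∈ F', ∃ M ∈ F', A ⊆ M ∧ ∀ B ∈ F', M ⊆ B → M = B := by
          intro A hA
          obtain ⟨M, hM, hmax⟩ := Set.Finite.exists_maximalFor
            (fun B => B.card) {B | B ∈ F' ∧ A ⊆ B} (Set.Finite.subset (F' : Finset (Finset α)).finite_toSet
              (by intro B hB; exact hB.1)) ⟨A, hA, subset_rfl⟩
          refine ⟨M, hM.1, hM.2, ?_⟩
          intro B hB hMB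
          by_contra hne'
          have hlt : M.card < B.card := Finset.card_lt_card (hMB.ssubset_of_ne hne')
          have : B.card ≤ M.card := hmax ⟨hB, hM.2.trans hMB⟩ (le_of_lt hlt)
          omega
        set Mx := F'.filter (fun M => ∀ B ∈ F', M ⊆ B → M = B) with hMx
        -- maximal members are pairwise disjoint
        have hMdisj : ∀ M₁ ∈ Mx, ∀ M₂ ∈ Mx, M₁ ≠ M₂ → Disjoint M₁ M₂ := by
          intro M₁ h₁ M₂ h₂ hne'
          have h₁' := Finset.mem_filter.mp h₁
          have h₂' := Finset.mem_filter.mp h₂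
          rcases hlam M₁ (Finset.mem_of_mem_erase h₁'.1) M₂ (Finset.mem_of_mem_erase h₂'.1)
            with h | h | h
          · exact absurd (h₁'.2 M₂ h₂'.1 h) hne'
          · exact absurd (h₂'.2 M₁ h₁'.1 h).symm hne'
          · exact h
        -- F' covered by the fibers
        have hcover : F' ⊆ Mx.biUnion (fun M => F'.filter (fun A => A ⊆ M)) := by
          intro A hA
          obtain ⟨M, hM, hAM, hmax⟩ := hmaxex A hA
          exact Finset.mem_biUnion.mpr ⟨M, Finset.mem_filter.mpr ⟨hM, hmax⟩,
            Finset.mem_filter.mpr ⟨hA, hAM⟩⟩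
        have hsum : F'.card ≤ ∑ M ∈ Mx, (F'.filter (fun A => A ⊆ M)).card :=
          le_trans (Finset.card_le_card hcover) (Finset.card_biUnion_le)
        -- each fiber: IH
        have hfib : ∀ M ∈ Mx, (F'.filter (fun A => A ⊆ M)).card + 1 ≤ 2 * M.card := by
          intro M hM
          have hM' := Finset.mem_filter.mp hM
          have hMX : M ⊆ X := hsub M (Finset.mem_of_mem_erase hM'.1)
          have hMne : M ≠ X := (Finset.mem_erase.mp hM'.1).1
          have hMcard : M.card ≤ n := by
            have : M.card < X.card := Finset.card_lt_card (hMX.ssubset_of_ne hMne)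
            omega
          refine ih M (F'.filter (fun A => A ⊆ M)) hMcard ?_ ?_ ?_ ⟨M, Finset.mem_filter.mpr ⟨hM'.1, subset_rfl⟩⟩
          · intro A hA; exact (Finset.mem_filter.mp hA).2
          · intro A hA; exact hne A (Finset.mem_of_mem_erase (Finset.mem_filter.mp hA).1)
          · intro A hA B hB
            exact hlam A (Finset.mem_of_mem_erase (Finset.mem_filter.mp hA).1)
              B (Finset.mem_of_mem_erase (Finset.mem_filter.mp hB).1)
        -- sum of maximal cards ≤ |X|
        have hMsum : ∑ M ∈ Mx, M.card ≤ X.card := by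
          rw [← Finset.card_biUnion (by intro M h₁ M₂ h₂ hne'; exact hMdisj M h₁ M₂ h₂ hne')]
          refine Finset.card_le_card ?_
          intro a ha
          obtain ⟨M, hM, haM⟩ := Finset.mem_biUnion.mp ha
          exact hsub M (Finset.mem_of_mem_erase (Finset.mem_filter.mp hM).1) haM
        have hMne : Mx.Nonempty := by
          obtain ⟨A, hA⟩ := hF'ne
          obtain ⟨M, hM, _, hmax⟩ := hmaxex A hA
          exact ⟨M, Finset.mem_filter.mpr ⟨hM, hmax⟩⟩
        have hk : 1 ≤ Mx.card := Finset.card_pos.mpr hMne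
        have hsum2 : F'.card + Mx.card ≤ 2 * ∑ M ∈ Mx, M.card := by
          calc F'.card + Mx.card ≤ (∑ M ∈ Mx, (F'.filter (fun A => A ⊆ M)).card) + Mx.card := by omega
          _ = ∑ M ∈ Mx, ((F'.filter (fun A => A ⊆ M)).card + 1) := by
              rw [Finset.sum_add_distrib]; simp
          _ ≤ ∑ M ∈ Mx, 2 * M.card := Finset.sum_le_sum hfib
          _ = 2 * ∑ M ∈ Mx, M.card := by rw [Finset.mul_sum]
        by_cases hk1 : Mx.card = 1
        · -- single maximal member, properly contained in X
          obtain ⟨M, hMeq⟩ := Finset.card_eq_one.mp hk1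
          have hMmem : M ∈ Mx := by rw [hMeq]; exact Finset.mem_singleton_self M
          have hM' := Finset.mem_filter.mp hMmem
          have hMX : M ⊆ X := hsub M (Finset.mem_of_mem_erase hM'.1)
          have hMneX : M ≠ X := (Finset.mem_erase.mp hM'.1).1
          have hMlt : M.card < X.card := Finset.card_lt_card (hMX.ssubset_of_ne hMneX)
          have : ∑ M' ∈ Mx, M'.card = M.card := by rw [hMeq]; simp
          omega
        · have hk2 : 2 ≤ Mx.card := by omega
          omega
end Laminar

section Sep
variable {V : Type*} {G : SimpleGraph V}

lemma exists_separated [DecidableEq V] (G : SimpleGraph V) (r : ℕ) :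
    ∀ (T : Finset V), ∃ T' ⊆ T,
      (∀ x ∈ T', ∀ y ∈ T', x ≠ y → ¬ (G.edist x y ≤ (r:ℕ∞))) ∧
      (∀ x ∈ T, ∃ y ∈ T', G.edist y x ≤ (r:ℕ∞)) := by
  intro T
  generalize hn : T.card = n
  induction n using Nat.strong_induction_on generalizing T with
  | _ n ih =>
    rcases Finset.eq_empty_or_nonempty T with rfl | ⟨x, hx⟩
    · exact ⟨∅, by simp⟩
    · classical
      set T₂ := T.filter (fun z => ¬ (G.edist x z ≤ (r:ℕ∞))) with hT₂
      have hxnot : x ∉ T₂ := by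
        simp [hT₂, SimpleGraph.edist_self]
      have hT₂T : T₂ ⊆ T := Finset.filter_subset _ _
      have hlt : T₂.card < n := by
        subst hn
        exact Finset.card_lt_card ⟨hT₂T, fun h => hxnot (h hx)⟩
      obtain ⟨T₂', hsub, hsep, hcov⟩ := ih T₂.card hlt T₂ rfl
      refine ⟨insert x T₂', ?_, ?_, ?_⟩
      · intro z hz
        rcases Finset.mem_insert.mp hz with rfl | hz'
        · exact hx
        · exact hT₂T (hsub hz')
      · intro a ha b hb hab
        rcases Finset.mem_insert.mp ha with rfl | ha' <;>
          rcases Finset.mem_insert.mp hb with rfl | hb'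
        · exact absurd rfl hab
        · exact (Finset.mem_filter.mp (hsub hb')).2
        · intro h
          exact (Finset.mem_filter.mp (hsub ha')).2 (by rwa [SimpleGraph.edist_comm] at h)
        · exact hsep a ha' b hb' hab
      · intro z hz
        by_cases h : G.edist x z ≤ (r:ℕ∞)
        · exact ⟨x, Finset.mem_insert_self _ _, h⟩
        · obtain ⟨y, hy, hy2⟩ := hcov z (Finset.mem_filter.mpr ⟨hz, h⟩)
          exact ⟨y, Finset.mem_insert_of_mem hy, hy2⟩
end Sep

section Graph
variable {V : Type*} {G : SimpleGraph V}

lemma exit_boundary {W : Set V} {a b : V} (p : G.Walk a b) (ha : a ∈ W) (hb : b ∉ W) :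
    ∃ z ∈ p.support, z ∈ InnerBoundary G W := by
  induction p with
  | nil => exact absurd ha hb
  | @cons a a' b hadj q ih =>
      by_cases h' : a' ∈ W
      · obtain ⟨z, hz, hz2⟩ := ih h' hb
        exact ⟨z, by simp [hz], hz2⟩
      · exact ⟨a, by simp, ha, a', h', hadj⟩

lemma first_entry {K : Set V} {a b : V} (p : G.Walk a b) (ha : a ∉ K) (hb : b ∈ K) :
    ∃ u, ∃ q : G.Walk a u, (∀ z ∈ q.support, z ∈ p.support ∧ z ∉ K) ∧
      ∃ v, v ∈ K ∧ G.Adj u v := by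
  induction p with
  | nil => exact absurd hb ha
  | @cons a a' b hadj q ih =>
      by_cases h' : a' ∈ K
      · exact ⟨a, SimpleGraph.Walk.nil, by simp [ha], a', h', hadj⟩
      · obtain ⟨u, q', hq', hv⟩ := ih h' hb
        refine ⟨u, SimpleGraph.Walk.cons hadj q', ?_, hv⟩
        intro z hz
        have hz2 : z = a ∨ z ∈ q'.support := by simpa using hz
        rcases hz2 with rfl | hz'
        · exact ⟨by simp, ha⟩
        · obtain ⟨h1, h2⟩ := hq' z hz'
          exact ⟨by simp [h1], h2⟩

lemma comp_meets_boundary {W : Set V} (hW : W.Finite) {A : Set V} {e u : V}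
    (hinf : (Comp G A e).Infinite) (hu : u ∈ Comp G A e) (huW : u ∈ W) :
    ∃ b, b ∈ InnerBoundary G W ∧ b ∈ Comp G A e := by
  obtain ⟨w, hw⟩ := (hinf.diff hW).nonempty
  obtain ⟨p, hp⟩ := conn_comp_pair hu hw.1
  obtain ⟨z, hz, hz2⟩ := exit_boundary p huW hw.2
  exact ⟨z, hz2, hp z hz⟩

/-- The local cluster of `x`. -/
def Kc (G : SimpleGraph V) (S : Set V) (t : ℕ) (x : V) : Set V :=
  Comp G (S ∩ GraphBall G x t) x

lemma kc_subset_ball {S : Set V} {t : ℕ} {x : V} : Kc G S t x ⊆ GraphBall G x t :=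
  fun _ h => (comp_subset h).2

lemma kc_subset_comp {S : Set V} {t : ℕ} {x : V} : Kc G S t x ⊆ Comp G S x := by
  intro a ha
  exact mem_comp_iff.mpr ((mem_comp_iff.mp ha).mono Set.inter_subset_left)

lemma mem_kc_self {S : Set V} {t : ℕ} {x : V} (hx : x ∈ S) : x ∈ Kc G S t x :=
  mem_comp_self ⟨hx, mem_ball_self x t⟩

/-- The key "one-sidedness" lemma. -/
lemma g3 {C K₁ K₂ : Set V} {p q z : V}
    (hK1C : K₁ ⊆ C) (hK2C : K₂ ⊆ C) (hdisj : Disjoint K₁ K₂)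
    (hp : p ∈ K₁) (hq : q ∈ K₂)
    (hK1conn : ∀ a ∈ K₁, Conn G K₁ p a)
    (hK2conn : ∀ a ∈ K₂, Conn G K₂ q a)
    (hCconn : ∀ a ∈ C, ∀ b ∈ C, Conn G C a b)
    (hz : z ∈ C) (hz1 : z ∉ K₁) (hz2 : z ∉ K₂)
    (hzE : z ∉ Comp G (C \ K₂) p) :
    z ∈ Comp G (C \ K₁) q := by
  classical
  have hK1sub : K₁ ⊆ C \ K₂ := fun a ha => ⟨hK1C ha, fun h => hdisj.ne_of_mem ha h rfl⟩
  have hK2sub : K₂ ⊆ C \ K₁ := fun a ha => ⟨hK2C ha, fun h => (hdisj.symm).ne_of_mem ha h rfl⟩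
  -- the component of z in C \ K₂ avoids K₁
  have hEz : ∀ k, k ∈ K₁ → k ∉ Comp G (C \ K₂) z := by
    intro k hk hkz
    apply hzE
    have h1 : Conn G (C \ K₂) p k := (hK1conn k hk).mono hK1sub
    have h2 : k ∈ Comp G (C \ K₂) p := mem_comp_iff.mpr h1
    exact mem_comp_trans h2 (mem_comp_iff.mpr (mem_comp_iff.mp hkz).symm)
  -- walk from z to q within C, first entry into K₂
  obtain ⟨pw, hpw⟩ := hCconn z hz q (hK2C hq)
  obtain ⟨u, qw, hqw, v, hvK, huv⟩ := first_entry pw hz2 hq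
  -- the support of qw lies in the component of z in C \ K₂, hence avoids K₁
  have hqwsub : ∀ w ∈ qw.support, w ∈ C \ (K₁ ∪ K₂) := by
    intro w hw
    have hwC : w ∈ C := hpw w (hqw w hw).1
    have hwK2 : w ∉ K₂ := (hqw w hw).2
    have hwcomp : w ∈ Comp G (C \ K₂) z := by
      refine mem_comp_iff.mpr ⟨qw.takeUntil w hw, ?_⟩
      intro a haa
      have ha' := hqw a (SimpleGraph.Walk.support_takeUntil_subset qw hw haa)
      exact ⟨hpw a ha'.1, ha'.2⟩
    refine ⟨hwC, ?_⟩
    rintro (h | h)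
    · exact hEz w h hwcomp
    · exact hwK2 h
  -- extend by the edge (u,v), getting a connection in C \ K₁ from z to v
  have hconnzv : Conn G (C \ K₁) z v := by
    refine ⟨qw.append huv.toWalk, ?_⟩
    intro w hw
    rcases (SimpleGraph.Walk.mem_support_append_iff _ _).mp hw with h | h
    · have := hqwsub w h
      exact ⟨this.1, fun hk => this.2 (Or.inl hk)⟩
    · have hw2 : w = u ∨ w = v := by
        simpa [SimpleGraph.Adj.toWalk] using h
      rcases hw2 with rfl | rfl
      · have := qw.end_mem_support
        have h3 := hqwsub w this
        exact ⟨h3.1, fun hk => h3.2 (Or.inl hk)⟩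
      · exact hK2sub hvK
  -- v is connected to q within K₂ ⊆ C \ K₁
  have hconnqv : Conn G (C \ K₁) q v := (hK2conn v hvK).mono hK2sub
  exact mem_comp_iff.mpr (hconnqv.trans hconnzv.symm)

end Graph

section TrifLemmas
variable {V : Type*} {G : SimpleGraph V} {S W : Set V} {t : ℕ}

/-- Every infinite branch at a type-b trifurcation point meets the inner boundary. -/
lemma branch_boundary (hW : W.Finite) {x : V}
    (hx : IsTrifurcation G S t x) (hxW : x ∈ W)
    (htypeB : InnerBoundary G W ∩ GraphBall G x t = ∅)
    {e : V} (he : e ∈ Comp G S x \ Kc G S t x)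
    (hinf : (Comp G (Comp G S x \ Kc G S t x) e).Infinite) :
    ∃ b, b ∈ InnerBoundary G W ∧ b ∈ Comp G (Comp G S x \ Kc G S t x) e := by
  classical
  set C := Comp G S x with hC
  set K := Kc G S t x with hK
  have hxC : x ∈ C := mem_comp_self hx.1
  have hxK : x ∈ K := mem_kc_self hx.1
  -- walk from e to x within C
  obtain ⟨pw, hpw⟩ := conn_comp_pair (x := x) he.1 hxC
  obtain ⟨u, qw, hqw, v, hvK, huv⟩ := first_entry pw he.2 hxK
  have huE : u ∈ Comp G (C \ K) e := by
    refine mem_comp_iff.mpr ⟨qw, ?_⟩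
    intro a ha
    exact ⟨hpw a (hqw a ha).1, (hqw a ha).2⟩
  by_cases huW : u ∈ W
  · exact comp_meets_boundary hW hinf huE huW
  · -- u ∉ W : walk from x to u through K hits the boundary inside the ball: contradiction
    obtain ⟨rw_, hrw⟩ := conn_comp_of_mem hvK
    -- rw_ : walk x → v within K
    have hwalk : ∀ z ∈ (rw_.append huv.symm.toWalk).support, z ∈ K ∪ {u} := by
      intro z hz
      rcases (SimpleGraph.Walk.mem_support_append_iff _ _).mp hz with h | h
      · exact Or.inl (hrw z h)
      · have hz2 : z = v ∨ z = u := by simpa [SimpleGraph.Adj.toWalk] using h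
        rcases hz2 with rfl | rfl
        · exact Or.inl hvK
        · exact Or.inr rfl
    obtain ⟨b, hbsup, hbbd⟩ := exit_boundary (rw_.append huv.symm.toWalk) hxW huW
    rcases hwalk b hbsup with h | h
    · exfalso
      have : b ∈ InnerBoundary G W ∩ GraphBall G x t := ⟨hbbd, kc_subset_ball h⟩
      rw [htypeB] at this
      exact this
    · exact absurd (h ▸ hbbd).1 huW

/-- At a type-b trifurcation there are two boundary vertices in distinct branches,
both outside the branch of any given reference vertex. -/
lemma two_marked (hW : W.Finite) {x : V}
    (hx : IsTrifurcation G S t x) (hxW : x ∈ W)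
    (htypeB : InnerBoundary G W ∩ GraphBall G x t = ∅)
    {b₀ : V} (hb₀ : b₀ ∈ Comp G S x \ Kc G S t x) :
    ∃ b₁ b₂, b₁ ∈ InnerBoundary G W ∧ b₂ ∈ InnerBoundary G W ∧
      b₁ ∈ Comp G S x ∧ b₂ ∈ Comp G S x ∧
      Comp G (Comp G S x \ Kc G S t x) b₁ ≠ Comp G (Comp G S x \ Kc G S t x) b₂ ∧
      b₁ ∉ Comp G (Comp G S x \ Kc G S t x) b₀ ∧
      b₂ ∉ Comp G (Comp G S x \ Kc G S t x) b₀ := by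
  classical
  set C := Comp G S x with hC
  set K := Kc G S t x with hK
  set D := C \ K with hD
  obtain ⟨f, hf, hinj⟩ := hx.2.2
  -- find two indices whose components differ from that of b₀
  have hpick : ∃ i j : Fin 3, i ≠ j ∧ Comp G D (f i) ≠ Comp G D b₀ ∧
      Comp G D (f j) ≠ Comp G D b₀ := by
    by_cases h0 : Comp G D (f 0) = Comp G D b₀
    · refine ⟨1, 2, by decide, ?_, ?_⟩ <;> intro h <;>
        [exact (by decide : (1:Fin 3) ≠ 0) (hinj (h.trans h0.symm));
         exact (by decide : (2:Fin 3) ≠ 0) (hinj (h.trans h0.symm))]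
    · by_cases h1 : Comp G D (f 1) = Comp G D b₀
      · refine ⟨0, 2, by decide, h0, ?_⟩
        intro h
        exact (by decide : (2:Fin 3) ≠ 1) (hinj (h.trans h1.symm))
      · exact ⟨0, 1, by decide, h0, h1⟩
  obtain ⟨i, j, hij, hi, hj⟩ := hpick
  obtain ⟨b₁, hb₁bd, hb₁⟩ := branch_boundary hW hx hxW htypeB (hf i).1 (hf i).2
  obtain ⟨b₂, hb₂bd, hb₂⟩ := branch_boundary hW hx hxW htypeB (hf j).1 (hf j).2
  have e₁ : Comp G D b₁ = Comp G D (f i) := comp_eq_of_mem hb₁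
  have e₂ : Comp G D b₂ = Comp G D (f j) := comp_eq_of_mem hb₂
  refine ⟨b₁, b₂, hb₁bd, hb₂bd, (comp_subset hb₁).1, (comp_subset hb₂).1, ?_, ?_, ?_⟩
  · rw [e₁, e₂]
    intro h
    exact hij (hinj h)
  · intro h
    exact hi (e₁ ▸ comp_eq_of_mem h)
  · intro h
    exact hj (e₂ ▸ comp_eq_of_mem h)

end TrifLemmas

section PairLemma
variable {V : Type*} {G : SimpleGraph V} {S W : Set V} {t : ℕ}

/-- The mark set of a type-b separated trifurcation. -/
def Umark (G : SimpleGraph V) (S W : Set V) (t : ℕ) (b₀ x : V) : Set V :=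
  {b | b ∈ InnerBoundary G W ∧ b ∈ Comp G S x ∧
    b ∉ Comp G (Comp G S x \ Kc G S t x) b₀}

lemma pair_lemma (hW : W.Finite) {x y : V}
    (hx : IsTrifurcation G S t x) (hy : IsTrifurcation G S t y)
    (hxW : x ∈ W) (hyW : y ∈ W)
    (hxB : InnerBoundary G W ∩ GraphBall G x t = ∅)
    (hyB : InnerBoundary G W ∩ GraphBall G y t = ∅)
    (hsep : ¬ (G.edist x y ≤ ((2*t+1 : ℕ) : ℕ∞)))
    (hsame : Comp G S y = Comp G S x)
    {b₀ : V} (hb₀bd : b₀ ∈ InnerBoundary G W) (hb₀C : b₀ ∈ Comp G S x) :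
    (Umark G S W t b₀ x ⊆ Umark G S W t b₀ y ∨ Umark G S W t b₀ y ⊆ Umark G S W t b₀ x ∨
      Disjoint (Umark G S W t b₀ x) (Umark G S W t b₀ y)) ∧
    Umark G S W t b₀ x ≠ Umark G S W t b₀ y := by
  classical
  have hKxC : Kc G S t x ⊆ Comp G S x := kc_subset_comp
  have hKyC : Kc G S t y ⊆ Comp G S x := by rw [← hsame]; exact kc_subset_comp
  have hdisj : Disjoint (Kc G S t x) (Kc G S t y) := by
    rw [Set.disjoint_left]
    intro z hzx hzy
    apply hsep
    have h1 : G.edist x z ≤ (t : ℕ∞) := kc_subset_ball hzx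
    have h2 : G.edist y z ≤ (t : ℕ∞) := kc_subset_ball hzy
    calc G.edist x y ≤ G.edist x z + G.edist z y := SimpleGraph.edist_triangle
    _ ≤ (t : ℕ∞) + (t : ℕ∞) := add_le_add h1 (SimpleGraph.edist_comm (u := y) ▸ h2)
    _ ≤ ((2*t+1 : ℕ) : ℕ∞) := by
        rw [← Nat.cast_add]
        exact_mod_cast Nat.le_succ_of_le (by omega)
  have hxKx : x ∈ Kc G S t x := mem_kc_self hx.1
  have hyKy : y ∈ Kc G S t y := mem_kc_self hy.1
  have hxC : x ∈ Comp G S x := mem_comp_self hx.1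
  have hyC : y ∈ Comp G S x := hKyC hyKy
  have hKxconn : ∀ a ∈ Kc G S t x, Conn G (Kc G S t x) x a := fun a ha => conn_comp_of_mem ha
  have hKyconn : ∀ a ∈ Kc G S t y, Conn G (Kc G S t y) y a := fun a ha => conn_comp_of_mem ha
  have hCconn : ∀ a ∈ Comp G S x, ∀ b ∈ Comp G S x, Conn G (Comp G S x) a b :=
    fun a ha b hb => conn_comp_pair ha hb
  have hmem : ∀ b, b ∈ InnerBoundary G W → b ∈ Comp G S x →
      b ∈ Comp G S x ∧ b ∉ Kc G S t x ∧ b ∉ Kc G S t y := by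
    intro b hbd hbC
    refine ⟨hbC, fun h => ?_, fun h => ?_⟩
    · have : b ∈ InnerBoundary G W ∩ GraphBall G x t := ⟨hbd, kc_subset_ball h⟩
      rw [hxB] at this; exact this
    · have : b ∈ InnerBoundary G W ∩ GraphBall G y t := ⟨hbd, kc_subset_ball h⟩
      rw [hyB] at this; exact this
  -- abbreviations
  have g3xy : ∀ z, z ∈ Comp G S x → z ∉ Kc G S t x → z ∉ Kc G S t y →
      z ∉ (Comp G (Comp G S x \ Kc G S t y) x) → z ∈ (Comp G (Comp G S x \ Kc G S t x) y) :=
    fun z h1 h2 h3 h4 => g3 hKxC hKyC hdisj hxKx hyKy hKxconn hKyconn hCconn h1 h2 h3 h4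
  have g3yx : ∀ z, z ∈ Comp G S x → z ∉ Kc G S t y → z ∉ Kc G S t x →
      z ∉ (Comp G (Comp G S x \ Kc G S t x) y) → z ∈ (Comp G (Comp G S x \ Kc G S t y) x) :=
    fun z h1 h2 h3 h4 => g3 hKyC hKxC hdisj.symm hyKy hxKx hKyconn hKxconn hCconn h1 h2 h3 h4
  have hb₀ := hmem b₀ hb₀bd hb₀C
  have hUxm : ∀ b, b ∈ Umark G S W t b₀ x ↔
      (b ∈ InnerBoundary G W ∧ b ∈ Comp G S x ∧ b ∉ (Comp G (Comp G S x \ Kc G S t x) b₀)) := fun b => Iff.rfl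
  have hUym : ∀ b, b ∈ Umark G S W t b₀ y ↔
      (b ∈ InnerBoundary G W ∧ b ∈ Comp G S x ∧ b ∉ (Comp G (Comp G S x \ Kc G S t y) b₀)) := by
    intro b
    unfold Umark
    rw [hsame]
    exact Iff.rfl
  -- marked points
  have hb₀D : b₀ ∈ Comp G S x \ Kc G S t x := ⟨hb₀C, hb₀.2.1⟩
  have hb₀D' : b₀ ∈ Comp G S y \ Kc G S t y := by rw [hsame]; exact ⟨hb₀C, hb₀.2.2⟩
  obtain ⟨a₁, a₂, ha₁bd, ha₂bd, ha₁C, ha₂C, hane, ha₁b₀, ha₂b₀⟩ :=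
    two_marked hW hx hxW hxB hb₀D
  obtain ⟨d₁, d₂, hd₁bd, hd₂bd, hd₁C, hd₂C, hdne, hd₁b₀, hd₂b₀⟩ :=
    two_marked hW hy hyW hyB hb₀D'
  rw [hsame] at hd₁C hd₂C hdne hd₁b₀ hd₂b₀
  have ha₁U : a₁ ∈ Umark G S W t b₀ x := (hUxm a₁).mpr ⟨ha₁bd, ha₁C, ha₁b₀⟩
  have ha₂U : a₂ ∈ Umark G S W t b₀ x := (hUxm a₂).mpr ⟨ha₂bd, ha₂C, ha₂b₀⟩
  have hd₁U : d₁ ∈ Umark G S W t b₀ y := (hUym d₁).mpr ⟨hd₁bd, hd₁C, hd₁b₀⟩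
  have hd₂U : d₂ ∈ Umark G S W t b₀ y := (hUym d₂).mpr ⟨hd₂bd, hd₂C, hd₂b₀⟩
  have hb₀Px : b₀ ∈ (Comp G (Comp G S x \ Kc G S t x) b₀) := mem_comp_self hb₀D
  have hb₀Py : b₀ ∈ (Comp G (Comp G S x \ Kc G S t y) b₀) := mem_comp_self ⟨hb₀C, hb₀.2.2⟩
  by_cases hcase : b₀ ∈ (Comp G (Comp G S x \ Kc G S t x) y)
  · have hPeq : (Comp G (Comp G S x \ Kc G S t x) b₀) = (Comp G (Comp G S x \ Kc G S t x) y) := comp_eq_of_mem hcase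
    by_cases hcase2 : b₀ ∈ (Comp G (Comp G S x \ Kc G S t y) x)
    · -- Case 2a : disjoint
      have hPeq2 : (Comp G (Comp G S x \ Kc G S t y) b₀) = (Comp G (Comp G S x \ Kc G S t y) x) := comp_eq_of_mem hcase2
      have hdisjU : Disjoint (Umark G S W t b₀ x) (Umark G S W t b₀ y) := by
        rw [Set.disjoint_left]
        intro b hbx hby
        obtain ⟨hbd, hbC, hbPx⟩ := (hUxm b).mp hbx
        obtain ⟨_, _, hbPy⟩ := (hUym b).mp hby
        have hb := hmem b hbd hbC
        have hbPyx : b ∉ (Comp G (Comp G S x \ Kc G S t y) x) := by rw [← hPeq2]; exact hbPy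
        have : b ∈ (Comp G (Comp G S x \ Kc G S t x) y) := g3xy b hb.1 hb.2.1 hb.2.2 hbPyx
        rw [← hPeq] at this
        exact hbPx this
      refine ⟨Or.inr (Or.inr hdisjU), ?_⟩
      intro heq
      exact (Set.disjoint_left.mp hdisjU (heq ▸ hd₁U)) hd₁U
    · -- Case 2b : Ux ⊆ Uy
      have hximpl : ∀ b, b ∈ Umark G S W t b₀ x → b ∈ (Comp G (Comp G S x \ Kc G S t y) x) := by
        intro b hbx
        obtain ⟨hbd, hbC, hbPx⟩ := (hUxm b).mp hbx
        have hb := hmem b hbd hbC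
        have hbPxy : b ∉ (Comp G (Comp G S x \ Kc G S t x) y) := by rw [← hPeq]; exact hbPx
        exact g3yx b hb.1 hb.2.2 hb.2.1 hbPxy
      have hsub : Umark G S W t b₀ x ⊆ Umark G S W t b₀ y := by
        intro b hbx
        obtain ⟨hbd, hbC, hbPx⟩ := (hUxm b).mp hbx
        have hbPyx := hximpl b hbx
        refine (hUym b).mpr ⟨hbd, hbC, ?_⟩
        intro hbb
        apply hcase2
        rw [← comp_eq_of_mem hbPyx, comp_eq_of_mem hbb]
        exact hb₀Py
      refine ⟨Or.inl hsub, ?_⟩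
      intro heq
      apply hdne
      have h1 : d₁ ∈ (Comp G (Comp G S x \ Kc G S t y) x) := hximpl d₁ (heq ▸ hd₁U)
      have h2 : d₂ ∈ (Comp G (Comp G S x \ Kc G S t y) x) := hximpl d₂ (heq ▸ hd₂U)
      rw [comp_eq_of_mem h1, comp_eq_of_mem h2]
  · -- Case 1 : Uy ⊆ Ux
    have hb₀E : b₀ ∈ (Comp G (Comp G S x \ Kc G S t y) x) := g3yx b₀ hb₀.1 hb₀.2.2 hb₀.2.1 hcase
    have hPeq : (Comp G (Comp G S x \ Kc G S t y) b₀) = (Comp G (Comp G S x \ Kc G S t y) x) := comp_eq_of_mem hb₀E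
    have hyimpl : ∀ b, b ∈ Umark G S W t b₀ y → b ∈ (Comp G (Comp G S x \ Kc G S t x) y) := by
      intro b hby
      obtain ⟨hbd, hbC, hbPy⟩ := (hUym b).mp hby
      have hb := hmem b hbd hbC
      have hbPyx : b ∉ (Comp G (Comp G S x \ Kc G S t y) x) := by rw [← hPeq]; exact hbPy
      exact g3xy b hb.1 hb.2.1 hb.2.2 hbPyx
    have hsub : Umark G S W t b₀ y ⊆ Umark G S W t b₀ x := by
      intro b hby
      obtain ⟨hbd, hbC, hbPy⟩ := (hUym b).mp hby
      have hbPxy := hyimpl b hby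
      refine (hUxm b).mpr ⟨hbd, hbC, ?_⟩
      intro hbb
      apply hcase
      rw [← comp_eq_of_mem hbPxy, comp_eq_of_mem hbb]
      exact hb₀Px
    refine ⟨Or.inr (Or.inl hsub), ?_⟩
    intro heq
    apply hane
    have h1 : a₁ ∈ (Comp G (Comp G S x \ Kc G S t x) y) := hyimpl a₁ (heq ▸ ha₁U)
    have h2 : a₂ ∈ (Comp G (Comp G S x \ Kc G S t x) y) := hyimpl a₂ (heq ▸ ha₂U)
    rw [comp_eq_of_mem h1, comp_eq_of_mem h2]

end PairLemma

section Det
variable {V : Type*} {G : SimpleGraph V}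

lemma det_bound
    (hlf : ∀ v : V, (G.neighborSet v).Finite)
    (htrans : ∀ x y : V, ∃ φ : G ≃g G, φ x = y)
    (x₀ : V) (t m m' : ℕ)
    (hm : m = (GraphBall G x₀ (2 * t + 1)).ncard)
    (hm' : 3 ≤ m')
    (S W : Set V) (hW : W.Finite) :
    {x | x ∈ W ∧ IsTrifurcation G S t x}.ncard ≤ m * m' * (InnerBoundary G W).ncard := by
  classical
  have hball : ∀ (a : V) (r : ℕ), (GraphBall G a r).ncard = (GraphBall G x₀ r).ncard := by
    intro a r
    obtain ⟨φ, hφ⟩ := htrans x₀ a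
    rw [← hφ, ← ball_image φ x₀ r, Set.ncard_image_of_injective _ φ.injective]
  have hbd_fin : (InnerBoundary G W).Finite := hW.subset (fun b hb => hb.1)
  set bdf := hbd_fin.toFinset with hbdf
  have hTfin : {x | x ∈ W ∧ IsTrifurcation G S t x}.Finite := hW.subset (fun x hx => hx.1)
  set Tf := hTfin.toFinset with hTf
  obtain ⟨T', hT'sub, hsep, hcov⟩ := exists_separated G (2*t+1) Tf
  have hT'mem : ∀ x ∈ T', x ∈ W ∧ IsTrifurcation G S t x := by
    intro x hx
    have := hT'sub hx
    rw [hTf, Set.Finite.mem_toFinset] at this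
    exact this
  -- Step A : |Tf| ≤ m * |T'|
  set fcov : V → V := fun z =>
    if h : ∃ y ∈ T', G.edist y z ≤ ((2*t+1:ℕ) : ℕ∞) then h.choose else z with hfcovdef
  have hfcov : ∀ z ∈ Tf, fcov z ∈ T' ∧ G.edist (fcov z) z ≤ ((2*t+1:ℕ) : ℕ∞) := by
    intro z hz
    have h := hcov z hz
    rw [hfcovdef]
    simp only [dif_pos h]
    exact ⟨h.choose_spec.1, h.choose_spec.2⟩
  have hA : Tf.card ≤ m * (Tf.image fcov).card := by
    refine Finset.card_le_mul_card_image Tf m ?_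
    intro b hb
    have hbT' : b ∈ T' := by
      obtain ⟨a, ha, rfl⟩ := Finset.mem_image.mp hb
      exact (hfcov a ha).1
    have hfinb := ball_finite hlf (2*t+1) b
    have hsubball : Tf.filter (fun a => fcov a = b) ⊆ hfinb.toFinset := by
      intro a ha
      obtain ⟨haT, hfa⟩ := Finset.mem_filter.mp ha
      rw [Set.Finite.mem_toFinset]
      have := (hfcov a haT).2
      rw [hfa] at this
      exact this
    calc (Tf.filter (fun a => fcov a = b)).card ≤ hfinb.toFinset.card :=
          Finset.card_le_card hsubball
    _ = (GraphBall G b (2*t+1)).ncard := (Set.ncard_eq_toFinset_card _ hfinb).symm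
    _ = m := by rw [hball, hm]
  have hA2 : (Tf.image fcov).card ≤ T'.card := by
    refine Finset.card_le_card ?_
    intro b hb
    obtain ⟨a, ha, rfl⟩ := Finset.mem_image.mp hb
    exact (hfcov a ha).1
  -- Step B : |T'| ≤ 3 * |bdf|
  set Ta := T'.filter (fun x => (InnerBoundary G W ∩ GraphBall G x t).Nonempty) with hTa
  set Tb := T'.filter (fun x => ¬ (InnerBoundary G W ∩ GraphBall G x t).Nonempty) with hTb
  have hsplit : Ta.card + Tb.card = T'.card :=
    Finset.card_filter_add_card_filter_not _
  -- B1 : type-a points inject into the boundary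
  set gb : V → V := fun x =>
    if h : (InnerBoundary G W ∩ GraphBall G x t).Nonempty then h.some else x with hgbdef
  have hgb : ∀ x ∈ Ta, gb x ∈ InnerBoundary G W ∩ GraphBall G x t := by
    intro x hx
    have h := (Finset.mem_filter.mp hx).2
    rw [hgbdef]
    simp only [dif_pos h]
    exact h.some_mem
  have hB1 : Ta.card ≤ bdf.card := by
    refine Finset.card_le_card_of_injOn gb ?_ ?_
    · intro x hx
      rw [hbdf, Finset.mem_coe, Set.Finite.mem_toFinset]
      exact (hgb x hx).1
    · intro x hx y hy hxy
      by_contra hne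
      have h1 : G.edist x (gb x) ≤ (t : ℕ∞) := (hgb x hx).2
      have h2 : G.edist y (gb y) ≤ (t : ℕ∞) := (hgb y hy).2
      rw [← hxy] at h2
      have hxT' : x ∈ T' := (Finset.mem_filter.mp hx).1
      have hyT' : y ∈ T' := (Finset.mem_filter.mp hy).1
      refine hsep x hxT' y hyT' hne ?_
      calc G.edist x y ≤ G.edist x (gb x) + G.edist (gb x) y := SimpleGraph.edist_triangle
      _ ≤ (t : ℕ∞) + (t : ℕ∞) := add_le_add h1 (SimpleGraph.edist_comm (u := y) ▸ h2)
      _ ≤ ((2*t+1 : ℕ) : ℕ∞) := by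
          rw [← Nat.cast_add]
          exact_mod_cast Nat.le_succ_of_le (by omega)
  -- B2 : type-b points
  set b0fun : Set V → V := fun C =>
    if h : (InnerBoundary G W ∩ C).Nonempty then h.some else x₀ with hb0def
  set UU : V → Finset V := fun x =>
    bdf.filter (fun b => b ∈ Umark G S W t (b0fun (Comp G S x)) x) with hUUdef
  have hTbfacts : ∀ x ∈ Tb, x ∈ W ∧ IsTrifurcation G S t x ∧
      InnerBoundary G W ∩ GraphBall G x t = ∅ := by
    intro x hx
    obtain ⟨hxT', hxne⟩ := Finset.mem_filter.mp hx
    obtain ⟨hxW, hxtrif⟩ := hT'mem x hxT'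
    exact ⟨hxW, hxtrif, Set.not_nonempty_iff_eq_empty.mp hxne⟩
  have hb0 : ∀ x ∈ Tb, b0fun (Comp G S x) ∈ InnerBoundary G W ∩ Comp G S x := by
    intro x hx
    obtain ⟨hxW, hxtrif, _⟩ := hTbfacts x hx
    have hne : (InnerBoundary G W ∩ Comp G S x).Nonempty := by
      obtain ⟨b, hb, hbC⟩ := comp_meets_boundary hW hxtrif.2.1 (mem_comp_self hxtrif.1) hxW
      exact ⟨b, hb, hbC⟩
    rw [hb0def]
    simp only [dif_pos hne]
    exact hne.some_mem
  have hUmem : ∀ x ∈ Tb, ∀ b, b ∈ UU x ↔ b ∈ Umark G S W t (b0fun (Comp G S x)) x := by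
    intro x hx b
    rw [hUUdef]
    simp only [Finset.mem_filter]
    constructor
    · exact fun h => h.2
    · intro h
      refine ⟨?_, h⟩
      rw [hbdf, Set.Finite.mem_toFinset]
      exact h.1
  have hUb0 : ∀ x ∈ Tb, b0fun (Comp G S x) ∈ Comp G S x \ Kc G S t x := by
    intro x hx
    obtain ⟨hxW, hxtrif, hxB⟩ := hTbfacts x hx
    have hb := hb0 x hx
    refine ⟨hb.2, fun h => ?_⟩
    have : b0fun (Comp G S x) ∈ InnerBoundary G W ∩ GraphBall G x t :=
      ⟨hb.1, kc_subset_ball h⟩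
    rw [hxB] at this
    exact this
  have hUne : ∀ x ∈ Tb, (UU x).Nonempty := by
    intro x hx
    obtain ⟨hxW, hxtrif, hxB⟩ := hTbfacts x hx
    obtain ⟨b₁, _, hb₁bd, _, hb₁C, _, _, hb₁b₀, _⟩ :=
      two_marked hW hxtrif hxW hxB (hUb0 x hx)
    exact ⟨b₁, (hUmem x hx b₁).mpr ⟨hb₁bd, hb₁C, hb₁b₀⟩⟩
  -- pairwise structure
  have hpair : ∀ x ∈ Tb, ∀ y ∈ Tb, x ≠ y →
      ((UU x : Set V) ⊆ UU y ∨ (UU y : Set V) ⊆ UU x ∨ Disjoint (UU x) (UU y)) ∧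
        UU x ≠ UU y := by
    intro x hx y hy hne
    obtain ⟨hxW, hxtrif, hxB⟩ := hTbfacts x hx
    obtain ⟨hyW, hytrif, hyB⟩ := hTbfacts y hy
    have hsepxy : ¬ (G.edist x y ≤ ((2*t+1 : ℕ) : ℕ∞)) :=
      hsep x (Finset.mem_filter.mp hx).1 y (Finset.mem_filter.mp hy).1 hne
    by_cases hsamec : Comp G S y = Comp G S x
    · have hb0eq : b0fun (Comp G S y) = b0fun (Comp G S x) := by rw [hsamec]
      have hb := hb0 x hx
      obtain ⟨hlam, hneU⟩ := pair_lemma hW hxtrif hytrif hxW hyW hxB hyB hsepxy hsamec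
        hb.1 hb.2
      constructor
      · rcases hlam with h | h | h
        · left
          intro b hb'
          have := (hUmem x hx b).mp (by exact_mod_cast hb')
          have h2 := h this
          rw [← hb0eq] at h2
          exact_mod_cast (hUmem y hy b).mpr h2
        · right; left
          intro b hb'
          have := (hUmem y hy b).mp (by exact_mod_cast hb')
          rw [hb0eq] at this
          exact_mod_cast (hUmem x hx b).mpr (h this)
        · right; right
          rw [Finset.disjoint_left]
          intro b hb1 hb2
          have h1 := (hUmem x hx b).mp hb1
          have h2 := (hUmem y hy b).mp hb2
          rw [hb0eq] at h2
          exact Set.disjoint_left.mp h h1 h2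
      · intro heq
        apply hneU
        ext b
        constructor
        · intro hbU
          have : b ∈ UU x := (hUmem x hx b).mpr hbU
          rw [heq] at this
          have h2 := (hUmem y hy b).mp this
          rw [hb0eq] at h2
          exact h2
        · intro hbU
          have hbU' : b ∈ Umark G S W t (b0fun (Comp G S y)) y := by rw [hb0eq]; exact hbU
          have : b ∈ UU y := (hUmem y hy b).mpr hbU'
          rw [← heq] at this
          exact (hUmem x hx b).mp this
    · -- different components: disjoint
      have hdisjU : Disjoint (UU x) (UU y) := by
        rw [Finset.disjoint_left]
        intro b hb1 hb2
        have h1 := (hUmem x hx b).mp hb1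
        have h2 := (hUmem y hy b).mp hb2
        exact hsamec ((comp_eq_of_mem h1.2.1).symm.trans (comp_eq_of_mem h2.2.1)).symm
      refine ⟨Or.inr (Or.inr hdisjU), fun heq => ?_⟩
      obtain ⟨b, hb⟩ := hUne x hx
      exact Finset.disjoint_left.mp hdisjU hb (heq ▸ hb)
  have hB2 : Tb.card ≤ 2 * bdf.card := by
    rcases Finset.eq_empty_or_nonempty Tb with h | hTbne
    · simp [h]
    · have hinj : Set.InjOn UU Tb := by
        intro x hx y hy hxy
        by_contra hne
        exact (hpair x hx y hy hne).2 hxy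
      have hcardim : Tb.card = (Tb.image UU).card := (Finset.card_image_of_injOn hinj).symm
      have hlamb : (Tb.image UU).card + 1 ≤ 2 * bdf.card := by
        refine laminar_card_bound bdf.card bdf (Tb.image UU) le_rfl ?_ ?_ ?_ ?_
        · intro A hA
          obtain ⟨x, hx, rfl⟩ := Finset.mem_image.mp hA
          exact Finset.filter_subset _ _
        · intro A hA
          obtain ⟨x, hx, rfl⟩ := Finset.mem_image.mp hA
          exact hUne x hx
        · intro A hA B hB
          obtain ⟨x, hx, rfl⟩ := Finset.mem_image.mp hA
          obtain ⟨y, hy, rfl⟩ := Finset.mem_image.mp hB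
          by_cases hne : x = y
          · subst hne; exact Or.inl subset_rfl
          · rcases (hpair x hx y hy hne).1 with h | h | h
            · exact Or.inl (by exact_mod_cast h)
            · exact Or.inr (Or.inl (by exact_mod_cast h))
            · exact Or.inr (Or.inr h)
        · exact hTbne.image UU
      omega
  -- combine
  have hfinal : Tf.card ≤ m * m' * bdf.card := by
    have h1 : Tf.card ≤ m * T'.card := le_trans hA (Nat.mul_le_mul_left m hA2)
    have h2 : T'.card ≤ 3 * bdf.card := by omega
    calc Tf.card ≤ m * (3 * bdf.card) := le_trans h1 (Nat.mul_le_mul_left m h2)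
    _ ≤ m * (m' * bdf.card) := Nat.mul_le_mul_left m (Nat.mul_le_mul_right _ hm')
    _ = m * m' * bdf.card := by ring
  calc {x | x ∈ W ∧ IsTrifurcation G S t x}.ncard = Tf.card :=
        Set.ncard_eq_toFinset_card _ hTfin
  _ ≤ m * m' * bdf.card := hfinal
  _ = m * m' * (InnerBoundary G W).ncard := by
      rw [hbdf, ← Set.ncard_eq_toFinset_card _ hbd_fin]

end Det
section Three
variable {V : Type*} {G : SimpleGraph V}

lemma three_le_ball (hconn : G.Connected)
    (hlf : ∀ v : V, (G.neighborSet v).Finite)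
    (htrans : ∀ x y : V, ∃ φ : G ≃g G, φ x = y)
    (hinf : Infinite V) (x₀ : V) (t : ℕ) :
    3 ≤ (GraphBall G x₀ (t+1)).ncard := by
  classical
  obtain ⟨z, hz⟩ := (Set.infinite_univ.diff (ball_finite hlf 1 x₀)).nonempty
  have hz1 : ¬ (G.edist x₀ z ≤ ((1:ℕ) : ℕ∞)) := hz.2
  have hnetop : G.edist x₀ z ≠ ⊤ :=
    SimpleGraph.edist_ne_top_iff_reachable.mpr (hconn.preconnected x₀ z)
  obtain ⟨p, hp⟩ := SimpleGraph.exists_walk_of_edist_ne_top hnetop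
  have hlen2 : 2 ≤ p.length := by
    by_contra h
    apply hz1
    rw [← hp]
    have hple : p.length ≤ 1 := by omega
    exact_mod_cast hple
  obtain ⟨a, b, w2, hadj1, hadj2, hw2⟩ : ∃ (a b : V) (w2 : G.Walk b z),
      G.Adj x₀ a ∧ G.Adj a b ∧ p.length = w2.length + 2 := by
    cases p with
    | nil => simp at hlen2
    | @cons _ a _ h1 q =>
        cases q with
        | nil => simp at hlen2
        | @cons _ b _ h2 r =>
            exact ⟨a, b, r, h1, h2, by simp [SimpleGraph.Walk.length_cons]⟩
  have hbx₀ : b ≠ x₀ := by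
    intro he
    have h1 : G.edist x₀ z ≤ (w2.length : ℕ∞) := by
      have h2 := (w2.copy he rfl).edist_le
      simpa using h2
    rw [← hp] at h1
    have : p.length ≤ w2.length := by exact_mod_cast h1
    omega
  obtain ⟨φ, hφ⟩ := htrans a x₀
  have hn1 : G.Adj x₀ (φ x₀) := by
    have := (SimpleGraph.Iso.map_adj_iff φ).mpr hadj1.symm
    rwa [hφ] at this
  have hn2 : G.Adj x₀ (φ b) := by
    have := (SimpleGraph.Iso.map_adj_iff φ).mpr hadj2
    rwa [hφ] at this
  have hne12 : φ x₀ ≠ φ b := fun h => hbx₀ (φ.injective h).symm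
  have hsub : ({x₀, φ x₀, φ b} : Set V) ⊆ GraphBall G x₀ (t+1) := by
    intro v hv
    have h1le : (1:ℕ) ≤ t+1 := by omega
    simp only [Set.mem_insert_iff, Set.mem_singleton_iff] at hv
    rcases hv with rfl | rfl | rfl
    · exact mem_ball_self _ _
    · exact ball_mono x₀ h1le (by exact_mod_cast hn1.toWalk.edist_le)
    · exact ball_mono x₀ h1le (by exact_mod_cast hn2.toWalk.edist_le)
  have h3 : ({x₀, φ x₀, φ b} : Set V).ncard = 3 :=
    Set.ncard_eq_three.mpr ⟨x₀, φ x₀, φ b, hn1.ne, hn2.ne, hne12, rfl⟩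
  rw [← h3]
  exact Set.ncard_le_ncard hsub (ball_finite hlf (t+1) x₀)

end Three
end Trif

open Trif
open scoped ENNReal

theorem stmt6 {V : Type*} (G : SimpleGraph V)
    (hconn : G.Connected)
    (hlf : ∀ v : V, (G.neighborSet v).Finite)
    (htrans : ∀ x y : V, ∃ φ : G ≃g G, φ x = y)
    (x₀ : V) (t : ℕ) (m m' : ℕ)
    (hm : m = (GraphBall G x₀ (2 * t + 1)).ncard)
    (hm' : m' = (GraphBall G x₀ (t + 1)).ncard)
    {Ω : Type*} [MeasurableSpace Ω] (P : Measure Ω) [IsProbabilityMeasure P]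
    (S : Ω → Set V)
    (hmeas : ∀ x : V, MeasurableSet {ω | IsTrifurcation G (S ω) t x})
    (c : ℝ) (hc : 0 < c)
    (hP : ∀ x : V, c ≤ (P {ω | IsTrifurcation G (S ω) t x}).toReal) :
    (∀ W : Set V, W.Finite → W.Nonempty →
      c / (m * m') ≤ ((InnerBoundary G W).ncard : ℝ) / (W.ncard : ℝ)) ∧
    0 < sInf {r : ℝ | ∃ A : Set V, A.Finite ∧ A.Nonempty ∧
      r = ((InnerBoundary G A).ncard : ℝ) / (A.ncard : ℝ)} := by
  classical
  rcases finite_or_infinite V with hfin | hinf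
  · -- finite vertex set: the hypotheses are contradictory
    exfalso
    have hempty : {ω | IsTrifurcation G (S ω) t x₀} = ∅ := by
      ext ω
      simp only [Set.mem_setOf_eq, Set.mem_empty_iff_false, iff_false]
      intro h
      exact h.2.1 (Set.toFinite _)
    have := hP x₀
    rw [hempty] at this
    simp at this
    linarith
  · have hm'3 : 3 ≤ m' := hm' ▸ three_le_ball hconn hlf htrans hinf x₀ t
    have hm1 : 1 ≤ m := by
      rw [hm]
      exact (Set.ncard_pos (ball_finite hlf _ x₀)).mpr ⟨x₀, mem_ball_self x₀ _⟩
    have hpos : (0:ℝ) < (m:ℝ) * (m':ℝ) := by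
      have h1 : (0:ℝ) < (m:ℝ) := by exact_mod_cast hm1
      have h2 : (0:ℝ) < (m':ℝ) := by exact_mod_cast (by omega : 0 < m')
      exact mul_pos h1 h2
    -- the key counting inequality
    have key : ∀ W : Set V, W.Finite → W.Nonempty →
        c * (W.ncard : ℝ) ≤ ((m : ℝ) * (m' : ℝ)) * ((InnerBoundary G W).ncard : ℝ) := by
      intro W hW hWne
      set Wf := hW.toFinset with hWf
      set N : ℕ := m * m' * (InnerBoundary G W).ncard with hN
      have hdet : ∀ ω, (Wf.filter (fun x => IsTrifurcation G (S ω) t x)).card ≤ N := by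
        intro ω
        have h1 := det_bound hlf htrans x₀ t m m' hm hm'3 (S ω) W hW
        have h2 : {x | x ∈ W ∧ IsTrifurcation G (S ω) t x}
            = ↑(Wf.filter (fun x => IsTrifurcation G (S ω) t x)) := by
          ext v
          simp [hWf, Set.Finite.mem_toFinset]
        rw [h2, Set.ncard_coe_finset] at h1
        exact h1
      have hmeas' : ∀ x ∈ Wf, Measurable
          (fun ω => Set.indicator {ω' | IsTrifurcation G (S ω') t x} (fun _ => (1:ℝ≥0∞)) ω) :=
        fun x _ => measurable_const.indicator (hmeas x)
      have hsum_eq : ∀ ω, (∑ x ∈ Wf,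
          Set.indicator {ω' | IsTrifurcation G (S ω') t x} (fun _ => (1:ℝ≥0∞)) ω)
          = ((Wf.filter (fun x => IsTrifurcation G (S ω) t x)).card : ℝ≥0∞) := by
        intro ω
        rw [← Finset.sum_boole]
        refine Finset.sum_congr rfl ?_
        intro x _
        rw [Set.indicator_apply]
        simp only [Set.mem_setOf_eq]
      have hkey_enn : (Wf.card : ℝ≥0∞) * ENNReal.ofReal c ≤ (N : ℝ≥0∞) := by
        have h2 : (Wf.card : ℝ≥0∞) * ENNReal.ofReal c
            ≤ ∑ x ∈ Wf, P {ω | IsTrifurcation G (S ω) t x} := by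
          rw [← nsmul_eq_mul]
          exact Finset.card_nsmul_le_sum _ _ _
            (fun x _ => ENNReal.ofReal_le_of_le_toReal (hP x))
        have h3 : ∑ x ∈ Wf, P {ω | IsTrifurcation G (S ω) t x}
            = ∫⁻ ω, ∑ x ∈ Wf,
                Set.indicator {ω' | IsTrifurcation G (S ω') t x} (fun _ => (1:ℝ≥0∞)) ω ∂P := by
          rw [lintegral_finset_sum Wf hmeas']
          refine Finset.sum_congr rfl ?_
          intro x _
          exact (lintegral_indicator_one (hmeas x)).symm
        have h4 : ∫⁻ ω, ∑ x ∈ Wf,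
            Set.indicator {ω' | IsTrifurcation G (S ω') t x} (fun _ => (1:ℝ≥0∞)) ω ∂P
            ≤ (N : ℝ≥0∞) := by
          calc ∫⁻ ω, ∑ x ∈ Wf,
              Set.indicator {ω' | IsTrifurcation G (S ω') t x} (fun _ => (1:ℝ≥0∞)) ω ∂P
              ≤ ∫⁻ _, (N : ℝ≥0∞) ∂P := by
                refine lintegral_mono ?_
                intro ω
                exact le_trans (le_of_eq (hsum_eq ω)) (Nat.cast_le.mpr (hdet ω))
          _ = (N : ℝ≥0∞) := by simp [lintegral_const, measure_univ]
        rw [h3] at h2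
        exact h2.trans h4
      have hfinN : ((N : ℝ≥0∞)) ≠ ⊤ := by simp
      have hconv := ENNReal.toReal_mono hfinN hkey_enn
      rw [ENNReal.toReal_mul, ENNReal.toReal_ofReal hc.le] at hconv
      rw [ENNReal.toReal_natCast] at hconv
      have hWcard : Wf.card = W.ncard := (Set.ncard_eq_toFinset_card _ hW).symm
      calc c * (W.ncard : ℝ) = (Wf.card : ℝ) * c := by rw [hWcard]; ring
      _ ≤ (N : ℝ) := hconv
      _ = ((m:ℝ) * (m':ℝ)) * ((InnerBoundary G W).ncard : ℝ) := by
          rw [hN]; push_cast; ring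
    have part1 : ∀ W : Set V, W.Finite → W.Nonempty →
        c / (m * m') ≤ ((InnerBoundary G W).ncard : ℝ) / (W.ncard : ℝ) := by
      intro W hW hWne
      have hW0 : (0:ℝ) < (W.ncard : ℝ) := by
        exact_mod_cast (Set.ncard_pos hW).mpr hWne
      rw [div_le_div_iff₀ hpos hW0]
      have := key W hW hWne
      linarith
    refine ⟨part1, ?_⟩
    have hRne : Set.Nonempty {r : ℝ | ∃ A : Set V, A.Finite ∧ A.Nonempty ∧
        r = ((InnerBoundary G A).ncard : ℝ) / (A.ncard : ℝ)} :=
      ⟨_, {x₀}, Set.finite_singleton x₀, Set.singleton_nonempty x₀, rfl⟩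
    have hlb : c / ((m:ℝ) * (m':ℝ)) ≤ sInf {r : ℝ | ∃ A : Set V, A.Finite ∧ A.Nonempty ∧
        r = ((InnerBoundary G A).ncard : ℝ) / (A.ncard : ℝ)} := by
      refine le_csInf hRne ?_
      rintro r ⟨A, hA, hAne, rfl⟩
      exact part1 A hA hAne
    have hpos2 : 0 < c / ((m:ℝ) * (m':ℝ)) := div_pos hc hpos
    linarith
end
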